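/- arXiv:2301.09135 — 3 statements merged into one kernel-verified Lean document; each statement's English description precedes it below -/
import Mathlib

section
/- Let K be a p-adic field with valuation v_p. Every bounded multiplicative semi-norm on the Tate algebra K⟨T⟩ restricts to a pseudo-valuation on K[T] (via f ↦ -log_p ‖f‖), and conversely every pseudo-valuation on K[T] extends uniquely by continuity to a bounded multiplicative semi-norm on K⟨T⟩; these two maps are mutually inverse bijections. -/
open Polynomial Filter
open scoped Classical

/-- `v` is a pseudo-valuation on `K[T]` over the valuation `vK` on `K`. -/
def IsPseudoValuation {K : Type*} [Field K] (vK : K → EReal)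
    (v : Polynomial K → EReal) : Prop :=
  0 ≤ v X ∧
  (∀ f g : Polynomial K, min (v f) (v g) ≤ v (f + g)) ∧
  (∀ f g : Polynomial K, v (f * g) = v f + v g) ∧
  (∀ c : K, v (C c) = vK c)

/-- `f` lies in the Tate algebra `K⟨T⟩`: its coefficients tend to `0`
`p`-adically, i.e. their valuations tend to `∞`. -/
def IsTate {K : Type*} [Field K] (vK : K → EReal) (f : PowerSeries K) : Prop :=
  Tendsto (fun j : ℕ => vK (PowerSeries.coeff (R := K) j f)) atTop (nhds ⊤)

/-- The Gauss norm `‖Σ a_j T^j‖ = sup_j p^{-vK(a_j)}`. -/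
noncomputable def gaussNorm {K : Type*} [Field K] (p : ℕ) (vK : K → EReal)
    (f : PowerSeries K) : ℝ :=
  ⨆ j : ℕ, (if PowerSeries.coeff (R := K) j f = 0 then 0
    else (p : ℝ) ^ (-(vK (PowerSeries.coeff (R := K) j f)).toReal))

/-- `N` is a bounded multiplicative semi-norm on the Tate algebra `K⟨T⟩`
(realized as the subtype of Tate power series), whose restriction to `K` is
the norm `p^{-vK}`. -/
def IsBddMultSeminorm {K : Type*} [Field K] (p : ℕ) (vK : K → EReal)
    (N : {f : PowerSeries K // IsTate vK f} → ℝ) : Prop :=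
  (∀ f, 0 ≤ N f) ∧
  (∀ f : {f : PowerSeries K // IsTate vK f}, (f : PowerSeries K) = 1 → N f = 1) ∧
  (∀ f : {f : PowerSeries K // IsTate vK f}, (f : PowerSeries K) = 0 → N f = 0) ∧
  (∀ f g h : {f : PowerSeries K // IsTate vK f},
    (h : PowerSeries K) = (f : PowerSeries K) * g → N h = N f * N g) ∧
  (∀ f g h : {f : PowerSeries K // IsTate vK f},
    (h : PowerSeries K) = (f : PowerSeries K) + g → N h ≤ max (N f) (N g)) ∧
  (∀ f, N f ≤ gaussNorm p vK (f : PowerSeries K)) ∧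
  (∀ (f : {f : PowerSeries K // IsTate vK f}) (c : K), c ≠ 0 →
    (f : PowerSeries K) = PowerSeries.C (R := K) c → N f = (p : ℝ) ^ (-(vK c).toReal))

namespace Stmt4Aux

lemma ultra_abs {x y c : ℝ} (hx : 0 ≤ x) (hy : 0 ≤ y) (hc : 0 ≤ c)
    (h1 : x ≤ max y c) (h2 : y ≤ max x c) : |x - y| ≤ c := by
  rcases le_total x y with h | h
  · rw [abs_sub_comm, abs_of_nonneg (by linarith)]
    rcases le_max_iff.1 h2 with h' | h' <;> linarith
  · rw [abs_of_nonneg (by linarith)]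
    rcases le_max_iff.1 h1 with h' | h' <;> linarith

lemma ereal_add_self {a : EReal} (h : a + a = a) (ht : a ≠ ⊤) (hb : a ≠ ⊥) : a = 0 := by
  have hc := EReal.coe_toReal ht hb
  set r := a.toReal
  rw [← hc] at h ⊢
  norm_cast at h ⊢
  linarith

lemma ereal_two_eq_zero {a : EReal} (h : a + a = 0) (hb : a ≠ ⊥) : a = 0 := by
  have ht : a ≠ ⊤ := by
    rintro rfl
    rw [EReal.top_add_of_ne_bot hb] at h
    exact absurd h (by simp)
  have hc := EReal.coe_toReal ht hb
  set r := a.toReal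
  rw [← hc] at h ⊢
  norm_cast at h ⊢
  linarith

variable {K : Type*} [Field K] {vK : K → EReal}

lemma vK_zero (hK0 : ∀ x : K, vK x = ⊤ ↔ x = 0) : vK 0 = ⊤ := (hK0 0).2 rfl

lemma vK_one (hK0 : ∀ x : K, vK x = ⊤ ↔ x = 0) (hKbot : ∀ x : K, vK x ≠ ⊥)
    (hKmul : ∀ x y : K, vK (x * y) = vK x + vK y) : vK 1 = 0 := by
  have h := hKmul 1 1
  rw [one_mul] at h
  exact ereal_add_self h.symm (fun ht => one_ne_zero ((hK0 1).1 ht)) (hKbot 1)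

lemma vK_neg_one (hK0 : ∀ x : K, vK x = ⊤ ↔ x = 0) (hKbot : ∀ x : K, vK x ≠ ⊥)
    (hKmul : ∀ x y : K, vK (x * y) = vK x + vK y) : vK (-1 : K) = 0 := by
  have h := hKmul (-1) (-1)
  rw [neg_one_mul, neg_neg, vK_one hK0 hKbot hKmul] at h
  exact ereal_two_eq_zero h.symm (hKbot _)

lemma vK_neg (hK0 : ∀ x : K, vK x = ⊤ ↔ x = 0) (hKbot : ∀ x : K, vK x ≠ ⊥)
    (hKmul : ∀ x y : K, vK (x * y) = vK x + vK y) (x : K) : vK (-x) = vK x := by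
  have h := hKmul (-1) x
  rw [neg_one_mul, vK_neg_one hK0 hKbot hKmul, zero_add] at h
  exact h

lemma vK_sum (hK0 : ∀ x : K, vK x = ⊤ ↔ x = 0)
    (hKadd : ∀ x y : K, min (vK x) (vK y) ≤ vK (x + y))
    {ι : Type*} (s : Finset ι) (a : ι → K) (B : EReal)
    (h : ∀ i ∈ s, B ≤ vK (a i)) : B ≤ vK (∑ i ∈ s, a i) := by
  classical
  induction s using Finset.cons_induction with
  | empty => simp [vK_zero hK0]
  | cons i s hi ih =>
    rw [Finset.sum_cons]
    refine le_trans ?_ (hKadd _ _)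
    exact le_min (h i (Finset.mem_cons_self i s))
      (ih fun j hj => h j (Finset.mem_cons_of_mem hj))

end Stmt4Aux

namespace Stmt4Aux

set_option linter.unusedSectionVars false

variable {K : Type*} [Field K] {vK : K → EReal}

section PV
variable {v : Polynomial K → EReal}
  (hK0 : ∀ x : K, vK x = ⊤ ↔ x = 0)
  (hKbot : ∀ x : K, vK x ≠ ⊥)
  (hKmul : ∀ x y : K, vK (x * y) = vK x + vK y)
  (hv : IsPseudoValuation vK v)
include hK0 hKbot hKmul hv

lemma v_C (c : K) : v (C c) = vK c := hv.2.2.2 c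

lemma v_zero : v 0 = ⊤ := by
  have := hv.2.2.2 0
  rwa [map_zero, vK_zero hK0] at this

lemma v_one : v 1 = 0 := by
  have := hv.2.2.2 1
  rwa [map_one, vK_one hK0 hKbot hKmul] at this

lemma v_neg (f : Polynomial K) : v (-f) = v f := by
  have h := hv.2.2.1 (C (-1)) f
  rw [hv.2.2.2, vK_neg_one hK0 hKbot hKmul, zero_add] at h
  rw [← h]
  congr 1
  simp

lemma v_X_pow (n : ℕ) : 0 ≤ v (X ^ n : Polynomial K) := by
  induction n with
  | zero => simp [pow_zero, v_one hK0 hKbot hKmul hv]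
  | succ n ih =>
    rw [pow_succ, hv.2.2.1]
    exact add_nonneg ih hv.1

lemma v_sum {ι : Type*} (s : Finset ι) (a : ι → Polynomial K) (B : EReal)
    (h : ∀ i ∈ s, B ≤ v (a i)) : B ≤ v (∑ i ∈ s, a i) := by
  classical
  induction s using Finset.cons_induction with
  | empty => simp [v_zero hK0 hKbot hKmul hv]
  | cons i s hi ih =>
    rw [Finset.sum_cons]
    refine le_trans ?_ (hv.2.1 _ _)
    exact le_min (h i (Finset.mem_cons_self i s))
      (ih fun j hj => h j (Finset.mem_cons_of_mem hj))

lemma v_ge_of_coeff (f : Polynomial K) (B : EReal)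
    (h : ∀ j, B ≤ vK (f.coeff j)) : B ≤ v f := by
  conv_rhs => rw [f.as_sum_support]
  refine v_sum hK0 hKbot hKmul hv _ _ _ fun j _ => ?_
  rw [← C_mul_X_pow_eq_monomial, hv.2.2.1, hv.2.2.2]
  calc B = B + 0 := (add_zero B).symm
  _ ≤ vK (f.coeff j) + v (X ^ j) :=
    add_le_add (h j) (v_X_pow hK0 hKbot hKmul hv j)

omit hKmul hv in
lemma exists_coeff_bound (f : Polynomial K) :
    ∃ M : ℝ, ∀ j, (M : EReal) ≤ vK (f.coeff j) := by
  classical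
  by_cases hs : f.support.Nonempty
  · refine ⟨f.support.inf' hs fun j => ((vK (f.coeff j)) ⊓ 0).toReal, fun j => ?_⟩
    by_cases hj : j ∈ f.support
    · have hne : vK (f.coeff j) ⊓ 0 ≠ ⊤ :=
        ((inf_le_right (a := vK (f.coeff j)) (b := (0:EReal))).trans_lt
          (by simp)).ne
      have hb : vK (f.coeff j) ⊓ 0 ≠ ⊥ :=
        (lt_inf_iff.2 ⟨bot_lt_iff_ne_bot.2 (hKbot _), by simp⟩).ne'
      refine le_trans ?_ (inf_le_left (b := (0 : EReal)))
      rw [← EReal.coe_toReal hne hb]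
      exact_mod_cast Finset.inf'_le _ hj
    · rw [notMem_support_iff.1 hj, vK_zero hK0]; exact le_top
  · refine ⟨0, fun j => ?_⟩
    have hz : f.coeff j = 0 := by
      by_contra h
      exact hs ⟨j, mem_support_iff.2 h⟩
    rw [hz, vK_zero hK0]; exact le_top

lemma exists_v_bound (f : Polynomial K) : ∃ M : ℝ, (M : EReal) ≤ v f := by
  obtain ⟨M, hM⟩ := exists_coeff_bound hK0 hKbot f
  exact ⟨M, v_ge_of_coeff hK0 hKbot hKmul hv f _ hM⟩

lemma v_ne_bot (f : Polynomial K) : v f ≠ ⊥ := by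
  obtain ⟨M, hM⟩ := exists_v_bound hK0 hKbot hKmul hv f
  intro h
  rw [h, le_bot_iff] at hM
  exact EReal.coe_ne_bot M hM

end PV

end Stmt4Aux

namespace Stmt4Aux

set_option linter.unusedSectionVars false

noncomputable def npoly (p : ℕ) {K : Type*} [Field K] (v : Polynomial K → EReal)
    (f : Polynomial K) : ℝ :=
  if v f = ⊤ then 0 else (p : ℝ) ^ (-(v f).toReal)

variable {K : Type*} [Field K] {vK : K → EReal} {p : ℕ}

lemma ppos (hp : 1 < (p : ℝ)) : (0 : ℝ) < p := lt_trans one_pos hp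

variable {v : Polynomial K → EReal}

lemma npoly_nonneg (hp : 1 < (p : ℝ)) (f : Polynomial K) : 0 ≤ npoly p v f := by
  unfold npoly
  split
  · exact le_rfl
  · exact Real.rpow_nonneg (ppos hp).le _

lemma npoly_of_ne_top {f : Polynomial K} (h : v f ≠ ⊤) :
    npoly p v f = (p : ℝ) ^ (-(v f).toReal) := if_neg h

lemma npoly_of_eq_top {f : Polynomial K} (h : v f = ⊤) : npoly p v f = 0 := if_pos h

lemma npoly_eq_zero_iff (hp : 1 < (p : ℝ)) {f : Polynomial K} :
    npoly p v f = 0 ↔ v f = ⊤ := by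
  constructor
  · intro h
    by_contra ht
    rw [npoly_of_ne_top ht] at h
    exact (Real.rpow_pos_of_pos (ppos hp) _).ne' h
  · exact npoly_of_eq_top

section NP
variable
  (hp : 1 < (p : ℝ))
  (hK0 : ∀ x : K, vK x = ⊤ ↔ x = 0)
  (hKbot : ∀ x : K, vK x ≠ ⊥)
  (hKmul : ∀ x y : K, vK (x * y) = vK x + vK y)
  (hv : IsPseudoValuation vK v)
include hp hK0 hKbot hKmul hv

lemma npoly_one : npoly p v (1 : Polynomial K) = 1 := by
  rw [npoly_of_ne_top (by rw [v_one hK0 hKbot hKmul hv]; simp),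
    v_one hK0 hKbot hKmul hv]
  simp

lemma npoly_mul (f g : Polynomial K) :
    npoly p v (f * g) = npoly p v f * npoly p v g := by
  by_cases hf : v f = ⊤
  · rw [npoly_of_eq_top hf, zero_mul, npoly_of_eq_top]
    rw [hv.2.2.1, hf, EReal.top_add_of_ne_bot (v_ne_bot hK0 hKbot hKmul hv g)]
  by_cases hg : v g = ⊤
  · rw [npoly_of_eq_top hg, mul_zero, npoly_of_eq_top]
    rw [hv.2.2.1, hg, EReal.add_top_of_ne_bot (v_ne_bot hK0 hKbot hKmul hv f)]
  have hfb := v_ne_bot hK0 hKbot hKmul hv f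
  have hgb := v_ne_bot hK0 hKbot hKmul hv g
  have hfg : v (f * g) ≠ ⊤ := by
    rw [hv.2.2.1]
    exact (EReal.add_lt_top hf hg).ne
  rw [npoly_of_ne_top hf, npoly_of_ne_top hg, npoly_of_ne_top hfg, hv.2.2.1,
    EReal.toReal_add hf hfb hg hgb, neg_add, Real.rpow_add (ppos hp)]

lemma npoly_anti {f g : Polynomial K} (h : v f ≤ v g) : npoly p v g ≤ npoly p v f := by
  by_cases hg : v g = ⊤
  · rw [npoly_of_eq_top hg]; exact npoly_nonneg hp f
  have hf : v f ≠ ⊤ := fun ht => hg (top_le_iff.1 (ht ▸ h))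
  rw [npoly_of_ne_top hf, npoly_of_ne_top hg]
  apply Real.rpow_le_rpow_of_exponent_le hp.le
  have := EReal.toReal_le_toReal h (v_ne_bot hK0 hKbot hKmul hv f) hg
  linarith

lemma npoly_add_le (f g : Polynomial K) :
    npoly p v (f + g) ≤ max (npoly p v f) (npoly p v g) := by
  have h := hv.2.1 f g
  rcases min_cases (v f) (v g) with ⟨he, -⟩ | ⟨he, -⟩
  all_goals rw [he] at h
  · exact le_max_of_le_left (npoly_anti hp hK0 hKbot hKmul hv h)
  · exact le_max_of_le_right (npoly_anti hp hK0 hKbot hKmul hv h)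

lemma npoly_neg (f : Polynomial K) : npoly p v (-f) = npoly p v f := by
  unfold npoly
  rw [v_neg hK0 hKbot hKmul hv]

lemma npoly_abs_sub (f g : Polynomial K) :
    |npoly p v f - npoly p v g| ≤ npoly p v (f - g) := by
  apply ultra_abs (npoly_nonneg hp f) (npoly_nonneg hp g) (npoly_nonneg hp _)
  · have h1 : f = g + (f - g) := by ring
    calc npoly p v f = npoly p v (g + (f - g)) := by rw [← h1]
    _ ≤ max (npoly p v g) (npoly p v (f - g)) := npoly_add_le hp hK0 hKbot hKmul hv g (f - g)
    _ ≤ _ := by rw [max_comm]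
  · have h1 : g = f + (-(f - g)) := by ring
    calc npoly p v g = npoly p v (f + (-(f - g))) := by rw [← h1]
    _ ≤ max (npoly p v f) (npoly p v (-(f-g))) := npoly_add_le hp hK0 hKbot hKmul hv _ _
    _ = _ := by rw [npoly_neg hp hK0 hKbot hKmul hv]

lemma npoly_le_of_coeff (f : Polynomial K) (M : ℝ)
    (h : ∀ j, (M : EReal) ≤ vK (f.coeff j)) : npoly p v f ≤ (p : ℝ) ^ (-M) := by
  have hM : (M : EReal) ≤ v f := v_ge_of_coeff hK0 hKbot hKmul hv f _ h
  by_cases hf : v f = ⊤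
  · rw [npoly_of_eq_top hf]
    exact (Real.rpow_pos_of_pos (ppos hp) _).le
  · rw [npoly_of_ne_top hf]
    apply Real.rpow_le_rpow_of_exponent_le hp.le
    have := EReal.toReal_le_toReal hM (EReal.coe_ne_bot M) hf
    rw [EReal.toReal_coe] at this
    linarith

end NP

end Stmt4Aux

namespace Stmt4Aux

set_option linter.unusedSectionVars false

variable {K : Type*} [Field K] {vK : K → EReal} {p : ℕ} {v : Polynomial K → EReal}

lemma tate_eventually {f : PowerSeries K} (hf : IsTate vK f) (M : ℝ) :
    ∀ᶠ j in atTop, (M : EReal) < vK (PowerSeries.coeff (R := K) j f) :=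
  hf (isOpen_Ioi.mem_nhds (EReal.coe_lt_top M))

lemma exists_rpow_lt (hp : 1 < (p : ℝ)) {ε : ℝ} (hε : 0 < ε) :
    ∃ M : ℝ, (p : ℝ) ^ (-M) < ε := by
  refine ⟨-Real.logb p (ε / 2), ?_⟩
  rw [neg_neg, Real.rpow_logb (ppos hp) (by linarith) (by linarith)]
  linarith

section TateK
variable (hK0 : ∀ x : K, vK x = ⊤ ↔ x = 0) (hKbot : ∀ x : K, vK x ≠ ⊥)
include hK0 hKbot

omit hKbot in
lemma poly_tate (q : Polynomial K) : IsTate vK (↑q : PowerSeries K) := by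
  apply Tendsto.congr' _ (tendsto_const_nhds (x := (⊤ : EReal)))
  filter_upwards [eventually_ge_atTop (q.natDegree + 1)] with j hj
  rw [Polynomial.coeff_coe, Polynomial.coeff_eq_zero_of_natDegree_lt (by omega),
    vK_zero hK0]

lemma tate_exists_bound {f : PowerSeries K} (hf : IsTate vK f) :
    ∃ c : ℝ, ∀ j, (c : EReal) ≤ vK (PowerSeries.coeff (R := K) j f) := by
  obtain ⟨n₀, hn₀⟩ := eventually_atTop.1 (tate_eventually hf 0)
  have aux : ∀ n : ℕ, ∃ c : ℝ, c ≤ 0 ∧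
      ∀ j < n, (c : EReal) ≤ vK (PowerSeries.coeff (R := K) j f) := by
    intro n
    induction n with
    | zero => exact ⟨0, le_rfl, fun j hj => absurd hj (by omega)⟩
    | succ n ih =>
      obtain ⟨c, hc0, hc⟩ := ih
      set x := vK (PowerSeries.coeff (R := K) n f) with hx
      have hne : x ⊓ 0 ≠ ⊤ :=
        ((inf_le_right (a := x) (b := (0:EReal))).trans_lt (by simp)).ne
      have hb : x ⊓ 0 ≠ ⊥ :=
        (lt_inf_iff.2 ⟨bot_lt_iff_ne_bot.2 (hKbot _), by simp⟩).ne'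
      refine ⟨min c (x ⊓ 0).toReal, le_trans (min_le_left _ _) hc0, fun j hj => ?_⟩
      rcases lt_or_ge j n with h | h
      · exact le_trans (by exact_mod_cast min_le_left c _) (hc j h)
      · have hj' : j = n := by omega
        subst hj'
        calc ((min c (x ⊓ 0).toReal : ℝ) : EReal) ≤ ((x ⊓ 0).toReal : EReal) := by
              exact_mod_cast min_le_right c _
        _ = x ⊓ 0 := EReal.coe_toReal hne hb
        _ ≤ x := inf_le_left
  obtain ⟨c, hc0, hc⟩ := aux n₀
  refine ⟨c, fun j => ?_⟩
  by_cases hj : j < n₀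
  · exact hc j hj
  · calc (c : EReal) ≤ (0 : ℝ) := by exact_mod_cast hc0
    _ ≤ _ := (hn₀ j (le_of_not_gt hj)).le

end TateK

section NV
variable
  (hp : 1 < (p : ℝ))
  (hK0 : ∀ x : K, vK x = ⊤ ↔ x = 0)
  (hKbot : ∀ x : K, vK x ≠ ⊥)
  (hKmul : ∀ x y : K, vK (x * y) = vK x + vK y)
  (hv : IsPseudoValuation vK v)
include hp hK0 hKbot hKmul hv

lemma trunc_abs_sub_le (f : PowerSeries K) {M : ℝ} {n₀ : ℕ}
    (hM : ∀ j, n₀ ≤ j → (M : EReal) ≤ vK (PowerSeries.coeff (R := K) j f))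
    {m n : ℕ} (hm : n₀ ≤ m) (hn : n₀ ≤ n) :
    |npoly p v (PowerSeries.trunc m f) - npoly p v (PowerSeries.trunc n f)| ≤
      (p : ℝ) ^ (-M) := by
  refine le_trans (npoly_abs_sub hp hK0 hKbot hKmul hv _ _)
    (npoly_le_of_coeff hp hK0 hKbot hKmul hv _ M fun j => ?_)
  rw [Polynomial.coeff_sub, PowerSeries.coeff_trunc, PowerSeries.coeff_trunc]
  rcases lt_or_ge j n₀ with hj | hj
  · rw [if_pos (lt_of_lt_of_le hj hm), if_pos (lt_of_lt_of_le hj hn), sub_self,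
      vK_zero hK0]
    exact le_top
  · have hMj := hM j hj
    split_ifs
    · rw [sub_self, vK_zero hK0]; exact le_top
    · rw [sub_zero]; exact hMj
    · rw [zero_sub, vK_neg hK0 hKbot hKmul]; exact hMj
    · rw [sub_self, vK_zero hK0]; exact le_top

lemma trunc_cauchy {f : PowerSeries K} (hf : IsTate vK f) :
    CauchySeq (fun n => npoly p v (PowerSeries.trunc n f)) := by
  rw [Metric.cauchySeq_iff']
  intro ε hε
  obtain ⟨M, hM⟩ := exists_rpow_lt hp hε
  obtain ⟨n₀, hn₀⟩ := eventually_atTop.1 (tate_eventually hf M)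
  refine ⟨n₀, fun n hn => ?_⟩
  rw [Real.dist_eq]
  exact lt_of_le_of_lt
    (trunc_abs_sub_le hp hK0 hKbot hKmul hv f (fun j hj => (hn₀ j hj).le) hn le_rfl) hM

end NV

noncomputable def NvFun (p : ℕ) {K : Type*} [Field K] (vK : K → EReal)
    (v : Polynomial K → EReal) (f : {f : PowerSeries K // IsTate vK f}) : ℝ :=
  limUnder atTop fun n => npoly p v (PowerSeries.trunc n f.val)

section NV2
variable
  (hp : 1 < (p : ℝ))
  (hK0 : ∀ x : K, vK x = ⊤ ↔ x = 0)
  (hKbot : ∀ x : K, vK x ≠ ⊥)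
  (hKmul : ∀ x y : K, vK (x * y) = vK x + vK y)
  (hv : IsPseudoValuation vK v)
include hp hK0 hKbot hKmul hv

lemma NvFun_tendsto (f : {f : PowerSeries K // IsTate vK f}) :
    Tendsto (fun n => npoly p v (PowerSeries.trunc n f.val)) atTop
      (nhds (NvFun p vK v f)) :=
  (trunc_cauchy hp hK0 hKbot hKmul hv f.2).tendsto_limUnder

lemma NvFun_nonneg (f : {f : PowerSeries K // IsTate vK f}) : 0 ≤ NvFun p vK v f :=
  ge_of_tendsto' (NvFun_tendsto hp hK0 hKbot hKmul hv f) fun n => npoly_nonneg hp _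

lemma NvFun_poly (q : Polynomial K) (hq : IsTate vK (↑q : PowerSeries K)) :
    NvFun p vK v ⟨↑q, hq⟩ = npoly p v q := by
  apply Tendsto.limUnder_eq
  apply Tendsto.congr' _ (tendsto_const_nhds (x := npoly p v q))
  filter_upwards [eventually_gt_atTop q.natDegree] with n hn
  rw [PowerSeries.trunc_coe_eq_self hn]

lemma NvFun_zero (f : {f : PowerSeries K // IsTate vK f}) (h : f.val = 0) :
    NvFun p vK v f = 0 := by
  apply Tendsto.limUnder_eq
  apply Tendsto.congr' _ (tendsto_const_nhds (x := (0:ℝ)))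
  filter_upwards with n
  rw [h, map_zero, npoly_of_eq_top (v_zero hK0 hKbot hKmul hv)]

lemma NvFun_one (f : {f : PowerSeries K // IsTate vK f}) (h : f.val = 1) :
    NvFun p vK v f = 1 := by
  apply Tendsto.limUnder_eq
  apply Tendsto.congr' _ (tendsto_const_nhds (x := (1:ℝ)))
  filter_upwards [eventually_ge_atTop 1] with n hn
  obtain ⟨m, rfl⟩ : ∃ m, n = m + 1 := ⟨n - 1, by omega⟩
  rw [h, PowerSeries.trunc_one, npoly_one hp hK0 hKbot hKmul hv]

lemma NvFun_const (f : {f : PowerSeries K // IsTate vK f}) (c : K) (hc : c ≠ 0)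
    (h : f.val = PowerSeries.C (R := K) c) :
    NvFun p vK v f = (p : ℝ) ^ (-(vK c).toReal) := by
  apply Tendsto.limUnder_eq
  apply Tendsto.congr' _ (tendsto_const_nhds (x := (p:ℝ) ^ (-(vK c).toReal)))
  filter_upwards [eventually_ge_atTop 1] with n hn
  obtain ⟨m, rfl⟩ : ∃ m, n = m + 1 := ⟨n - 1, by omega⟩
  rw [h, PowerSeries.trunc_C]
  rw [npoly_of_ne_top (by rw [hv.2.2.2]; exact fun ht => hc ((hK0 c).1 ht)), hv.2.2.2]

lemma NvFun_add (f g h : {f : PowerSeries K // IsTate vK f})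
    (hh : h.val = f.val + g.val) :
    NvFun p vK v h ≤ max (NvFun p vK v f) (NvFun p vK v g) := by
  refine le_of_tendsto_of_tendsto' (NvFun_tendsto hp hK0 hKbot hKmul hv h)
    ((NvFun_tendsto hp hK0 hKbot hKmul hv f).max
      (NvFun_tendsto hp hK0 hKbot hKmul hv g)) fun n => ?_
  rw [hh, map_add]
  exact npoly_add_le hp hK0 hKbot hKmul hv _ _

end NV2

end Stmt4Aux

namespace Stmt4Aux

set_option linter.unusedSectionVars false

variable {K : Type*} [Field K] {vK : K → EReal} {p : ℕ} {v : Polynomial K → EReal}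

lemma trunc_mul_coeff (f g : PowerSeries K) {n j : ℕ} (hj : j < n) :
    (PowerSeries.trunc n f * PowerSeries.trunc n g).coeff j =
      PowerSeries.coeff (R := K) j (f * g) := by
  rw [Polynomial.coeff_mul, PowerSeries.coeff_mul]
  refine Finset.sum_congr rfl fun x hx => ?_
  rw [Finset.HasAntidiagonal.mem_antidiagonal] at hx
  rw [PowerSeries.coeff_trunc, PowerSeries.coeff_trunc, if_pos (by omega), if_pos (by omega)]

section G1
variable
  (hp : 1 < (p : ℝ))
  (hK0 : ∀ x : K, vK x = ⊤ ↔ x = 0)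
  (hKbot : ∀ x : K, vK x ≠ ⊥)
include hp hK0 hKbot

lemma gauss_term_le {f : PowerSeries K} (hf : IsTate vK f) :
    ∃ c : ℝ, ∀ j : ℕ, (if PowerSeries.coeff (R := K) j f = 0 then 0
      else (p : ℝ) ^ (-(vK (PowerSeries.coeff (R := K) j f)).toReal)) ≤ (p : ℝ) ^ (-c) := by
  obtain ⟨c, hc⟩ := tate_exists_bound hK0 hKbot hf
  refine ⟨c, fun j => ?_⟩
  split_ifs with h
  · exact (Real.rpow_pos_of_pos (ppos hp) _).le
  · apply Real.rpow_le_rpow_of_exponent_le hp.le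
    have ht : vK (PowerSeries.coeff (R := K) j f) ≠ ⊤ := fun ht => h ((hK0 _).1 ht)
    have := EReal.toReal_le_toReal (hc j) (EReal.coe_ne_bot c) ht
    rw [EReal.toReal_coe] at this
    linarith

lemma gauss_bddAbove {f : PowerSeries K} (hf : IsTate vK f) :
    BddAbove (Set.range fun j : ℕ => (if PowerSeries.coeff (R := K) j f = 0 then 0
      else (p : ℝ) ^ (-(vK (PowerSeries.coeff (R := K) j f)).toReal))) := by
  obtain ⟨c, hc⟩ := gauss_term_le hp hK0 hKbot hf
  exact ⟨(p : ℝ) ^ (-c), Set.forall_mem_range.2 hc⟩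

lemma gauss_nonneg (f : PowerSeries K) : 0 ≤ gaussNorm p vK f :=
  Real.iSup_nonneg fun j => by
    split_ifs
    · exact le_rfl
    · exact Real.rpow_nonneg (ppos hp).le _

end G1

section G2
variable
  (hp : 1 < (p : ℝ))
  (hK0 : ∀ x : K, vK x = ⊤ ↔ x = 0)
  (hKbot : ∀ x : K, vK x ≠ ⊥)
  (hKmul : ∀ x y : K, vK (x * y) = vK x + vK y)
  (hKadd : ∀ x y : K, min (vK x) (vK y) ≤ vK (x + y))
  (hv : IsPseudoValuation vK v)
include hp hK0 hKbot hKmul hv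

omit hv in
include hKadd in
lemma mul_tail_bound {f g : PowerSeries K} {cf cg M : ℝ}
    (hcf : ∀ j, (cf : EReal) ≤ vK (PowerSeries.coeff (R := K) j f))
    (hcg : ∀ j, (cg : EReal) ≤ vK (PowerSeries.coeff (R := K) j g))
    {n₁ : ℕ}
    (h1 : ∀ j, n₁ ≤ j → ((M - cg : ℝ) : EReal) ≤ vK (PowerSeries.coeff (R := K) j f))
    (h2 : ∀ j, n₁ ≤ j → ((M - cf : ℝ) : EReal) ≤ vK (PowerSeries.coeff (R := K) j g))
    {n : ℕ} (hn : 2 * n₁ ≤ n) (j : ℕ) :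
    (M : EReal) ≤ vK ((PowerSeries.trunc n (f * g) -
      PowerSeries.trunc n f * PowerSeries.trunc n g).coeff j) := by
  have key : ∀ (h : PowerSeries K) (c : ℝ) (i : ℕ),
      (c : EReal) ≤ vK (PowerSeries.coeff (R := K) i h) →
      (c : EReal) ≤ vK ((PowerSeries.trunc n h).coeff i) := by
    intro h c i hc
    rw [PowerSeries.coeff_trunc]
    split_ifs
    · exact hc
    · rw [vK_zero hK0]; exact le_top
  rw [Polynomial.coeff_sub, PowerSeries.coeff_trunc]
  by_cases hj : j < n
  · rw [if_pos hj, trunc_mul_coeff f g hj, sub_self, vK_zero hK0]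
    exact le_top
  · rw [if_neg hj, zero_sub, vK_neg hK0 hKbot hKmul, Polynomial.coeff_mul]
    refine vK_sum hK0 hKadd _ _ _ fun x hx => ?_
    rw [Finset.HasAntidiagonal.mem_antidiagonal] at hx
    rw [hKmul]
    rcases (by omega : n₁ ≤ x.1 ∨ n₁ ≤ x.2) with hx1 | hx2
    · calc (M : EReal) = ((M - cg : ℝ) : EReal) + (cg : EReal) := by
            rw [← EReal.coe_add]; norm_num
      _ ≤ _ := add_le_add (key f _ _ (h1 x.1 hx1)) (key g _ _ (hcg x.2))
    · calc (M : EReal) = ((cf : ℝ) : EReal) + ((M - cf : ℝ) : EReal) := by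
            rw [← EReal.coe_add]; norm_num
      _ ≤ _ := add_le_add (key f _ _ (hcf x.1)) (key g _ _ (h2 x.2 hx2))

lemma npoly_mul_diff_tendsto {f g : PowerSeries K} (hf : IsTate vK f)
    (hg : IsTate vK g) (hKadd : ∀ x y : K, min (vK x) (vK y) ≤ vK (x + y)) :
    Tendsto (fun n => npoly p v (PowerSeries.trunc n (f * g) -
      PowerSeries.trunc n f * PowerSeries.trunc n g)) atTop (nhds 0) := by
  rw [Metric.tendsto_atTop]
  intro ε hε
  obtain ⟨M, hM⟩ := exists_rpow_lt hp hε
  obtain ⟨cf, hcf⟩ := tate_exists_bound hK0 hKbot hf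
  obtain ⟨cg, hcg⟩ := tate_exists_bound hK0 hKbot hg
  obtain ⟨n₁, hn₁⟩ := eventually_atTop.1
    ((tate_eventually hf (M - cg)).and (tate_eventually hg (M - cf)))
  refine ⟨2 * n₁, fun n hn => ?_⟩
  rw [Real.dist_eq, sub_zero, abs_of_nonneg (npoly_nonneg hp _)]
  refine lt_of_le_of_lt (npoly_le_of_coeff hp hK0 hKbot hKmul hv _ M ?_) hM
  exact mul_tail_bound hp hK0 hKbot hKmul hKadd hcf hcg
    (fun j hj => (hn₁ j hj).1.le) (fun j hj => (hn₁ j hj).2.le) hn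

lemma NvFun_mul (hKadd : ∀ x y : K, min (vK x) (vK y) ≤ vK (x + y))
    (f g h : {f : PowerSeries K // IsTate vK f}) (hh : h.val = f.val * g.val) :
    NvFun p vK v h = NvFun p vK v f * NvFun p vK v g := by
  have h1 : Tendsto (fun n => npoly p v (PowerSeries.trunc n f.val) *
      npoly p v (PowerSeries.trunc n g.val)) atTop
      (nhds (NvFun p vK v f * NvFun p vK v g)) :=
    (NvFun_tendsto hp hK0 hKbot hKmul hv f).mul (NvFun_tendsto hp hK0 hKbot hKmul hv g)
  have h2 : Tendsto (fun n => npoly p v (PowerSeries.trunc n h.val) -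
      npoly p v (PowerSeries.trunc n f.val) * npoly p v (PowerSeries.trunc n g.val))
      atTop (nhds 0) := by
    apply squeeze_zero_norm (fun n => ?_)
      (npoly_mul_diff_tendsto hp hK0 hKbot hKmul hv f.2 g.2 hKadd)
    rw [hh, Real.norm_eq_abs, ← npoly_mul hp hK0 hKbot hKmul hv
      (PowerSeries.trunc n f.val) (PowerSeries.trunc n g.val),
      ← PowerSeries.trunc_trunc_mul_trunc]
    exact npoly_abs_sub hp hK0 hKbot hKmul hv _ _
  have h3 := h2.add h1
  rw [zero_add] at h3
  refine Tendsto.limUnder_eq ?_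
  simpa using h3

lemma npoly_trunc_le_gauss {f : PowerSeries K} (hf : IsTate vK f) (n : ℕ) :
    npoly p v (PowerSeries.trunc n f) ≤ gaussNorm p vK f := by
  set g := PowerSeries.trunc n f with hg
  by_cases hvg : v g = ⊤
  · rw [npoly_of_eq_top hvg]
    exact gauss_nonneg hp hK0 hKbot f
  · have hne : g.support.Nonempty := by
      rw [Finset.nonempty_iff_ne_empty]
      intro hs
      rw [Polynomial.support_eq_empty] at hs
      rw [hs, v_zero hK0 hKbot hKmul hv] at hvg
      exact hvg rfl
    obtain ⟨j₀, hj₀s, hj₀min⟩ := Finset.exists_min_image g.support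
      (fun j => vK (g.coeff j)) hne
    have hc0 : g.coeff j₀ ≠ 0 := mem_support_iff.1 hj₀s
    have hB : vK (g.coeff j₀) ≤ v g := by
      refine v_ge_of_coeff hK0 hKbot hKmul hv g _ fun j => ?_
      by_cases hjs : j ∈ g.support
      · exact hj₀min j hjs
      · rw [notMem_support_iff.1 hjs, vK_zero hK0]; exact le_top
    have hjn : g.coeff j₀ = PowerSeries.coeff (R := K) j₀ f := by
      rw [hg, PowerSeries.coeff_trunc] at hc0 ⊢
      split_ifs with hlt
      · rfl
      · exact absurd (if_neg hlt) hc0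
    have h1 : npoly p v g ≤ (p : ℝ) ^ (-(vK (g.coeff j₀)).toReal) := by
      rw [npoly_of_ne_top hvg]
      apply Real.rpow_le_rpow_of_exponent_le hp.le
      have := EReal.toReal_le_toReal hB (hKbot _) hvg
      linarith
    refine h1.trans ?_
    refine le_trans ?_ (le_ciSup (gauss_bddAbove hp hK0 hKbot hf) j₀)
    rw [← hjn, if_neg (hjn ▸ hc0)]

lemma NvFun_le_gauss (f : {f : PowerSeries K // IsTate vK f}) :
    NvFun p vK v f ≤ gaussNorm p vK f.val :=
  le_of_tendsto' (NvFun_tendsto hp hK0 hKbot hKmul hv f)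
    fun n => npoly_trunc_le_gauss hp hK0 hKbot hKmul hv f.2 n

end G2

end Stmt4Aux

namespace Stmt4Aux

set_option linter.unusedSectionVars false

variable {K : Type*} [Field K] {vK : K → EReal} {p : ℕ}

section U
variable
  (hp : 1 < (p : ℝ))
  (hK0 : ∀ x : K, vK x = ⊤ ↔ x = 0)
  (hKbot : ∀ x : K, vK x ≠ ⊥)
  (hKmul : ∀ x y : K, vK (x * y) = vK x + vK y)
include hp hK0 hKbot hKmul

omit hp hKbot hKmul in
lemma tail_tate {f : PowerSeries K} (hf : IsTate vK f) (n : ℕ) :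
    IsTate vK (f - ↑(PowerSeries.trunc n f)) := by
  apply hf.congr'
  filter_upwards [eventually_ge_atTop n] with j hj
  rw [map_sub, Polynomial.coeff_coe, PowerSeries.coeff_trunc, if_neg (by omega), sub_zero]

lemma gauss_tail_tendsto {f : PowerSeries K} (hf : IsTate vK f) :
    Tendsto (fun n => gaussNorm p vK (f - ↑(PowerSeries.trunc n f))) atTop (nhds 0) := by
  rw [Metric.tendsto_atTop]
  intro ε hε
  obtain ⟨M, hM⟩ := exists_rpow_lt hp hε
  obtain ⟨n₀, hn₀⟩ := eventually_atTop.1 (tate_eventually hf M)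
  refine ⟨n₀, fun n hn => ?_⟩
  rw [Real.dist_eq, sub_zero, abs_of_nonneg (gauss_nonneg hp hK0 hKbot _)]
  refine lt_of_le_of_lt (ciSup_le fun j => ?_) hM
  have hcoeff : PowerSeries.coeff (R := K) j (f - ↑(PowerSeries.trunc n f)) =
      if j < n then 0 else PowerSeries.coeff (R := K) j f := by
    rw [map_sub, Polynomial.coeff_coe, PowerSeries.coeff_trunc]
    split_ifs
    · rw [sub_self]
    · rw [sub_zero]
  rw [hcoeff]
  by_cases h1 : j < n
  · rw [if_pos h1, if_pos rfl]
    exact Real.rpow_nonneg (ppos hp).le _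
  · rw [if_neg h1]
    by_cases h2 : PowerSeries.coeff (R := K) j f = 0
    · rw [if_pos h2]
      exact Real.rpow_nonneg (ppos hp).le _
    · rw [if_neg h2]
      apply Real.rpow_le_rpow_of_exponent_le hp.le
      have hj : (M : EReal) ≤ vK (PowerSeries.coeff (R := K) j f) := (hn₀ j (by omega)).le
      have ht : vK (PowerSeries.coeff (R := K) j f) ≠ ⊤ := fun ht => h2 ((hK0 _).1 ht)
      have := EReal.toReal_le_toReal hj (EReal.coe_ne_bot M) ht
      rw [EReal.toReal_coe] at this
      linarith

lemma N_neg_eq {N : {f : PowerSeries K // IsTate vK f} → ℝ}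
    (hN : IsBddMultSeminorm p vK N) (t s : {f : PowerSeries K // IsTate vK f})
    (hts : t.val = -s.val) : N t = N s := by
  have hc : IsTate vK (PowerSeries.C (R := K) (-1 : K)) := by
    rw [← Polynomial.coe_C]
    exact poly_tate hK0 _
  have h1 : N ⟨PowerSeries.C (R := K) (-1 : K), hc⟩ = 1 := by
    rw [hN.2.2.2.2.2.2 _ (-1 : K) (by norm_num) rfl, vK_neg_one hK0 hKbot hKmul]
    simp
  have h2 := hN.2.2.2.1 ⟨PowerSeries.C (R := K) (-1 : K), hc⟩ s t
    (by
      show t.val = (PowerSeries.C (R := K)) (-1 : K) * s.val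
      rw [hts]
      have hC : (PowerSeries.C (R := K)) (-1 : K) = -1 := by simp
      rw [hC]
      ring)
  rw [h1, one_mul] at h2
  exact h2

lemma neg_tate {x : PowerSeries K} (hx : IsTate vK x) : IsTate vK (-x) := by
  apply hx.congr fun j => ?_
  rw [map_neg, vK_neg hK0 hKbot hKmul]

lemma N_trunc_tendsto {N : {f : PowerSeries K // IsTate vK f} → ℝ}
    (hN : IsBddMultSeminorm p vK N) (f : {f : PowerSeries K // IsTate vK f}) :
    Tendsto (fun n => N ⟨↑(PowerSeries.trunc n f.val), poly_tate hK0 _⟩) atTop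
      (nhds (N f)) := by
  have habs : ∀ n : ℕ, |N ⟨↑(PowerSeries.trunc n f.val), poly_tate hK0 _⟩ - N f| ≤
      gaussNorm p vK (f.val - ↑(PowerSeries.trunc n f.val)) := by
    intro n
    set tr : {f : PowerSeries K // IsTate vK f} :=
      ⟨↑(PowerSeries.trunc n f.val), poly_tate hK0 _⟩ with htr
    set tl : {f : PowerSeries K // IsTate vK f} :=
      ⟨f.val - ↑(PowerSeries.trunc n f.val), tail_tate hK0 f.2 n⟩ with htl
    set ntl : {f : PowerSeries K // IsTate vK f} :=
      ⟨-(f.val - ↑(PowerSeries.trunc n f.val)),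
        neg_tate hp hK0 hKbot hKmul (tail_tate hK0 f.2 n)⟩ with hntl
    have h1 : N f ≤ max (N tr) (N tl) := hN.2.2.2.2.1 tr tl f (by
      show f.val = ↑(PowerSeries.trunc n f.val) + (f.val - ↑(PowerSeries.trunc n f.val))
      ring)
    have hneg : N ntl = N tl := N_neg_eq hp hK0 hKbot hKmul hN ntl tl rfl
    have h2 : N tr ≤ max (N f) (N ntl) := hN.2.2.2.2.1 f ntl tr (by
      show (↑(PowerSeries.trunc n f.val) : PowerSeries K) =
        f.val + -(f.val - ↑(PowerSeries.trunc n f.val))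
      ring)
    rw [hneg] at h2
    exact le_trans (ultra_abs (hN.1 tr) (hN.1 f) (hN.1 tl) h2 h1)
      (hN.2.2.2.2.2.1 tl)
  have h0 := squeeze_zero_norm
    (f := fun n => N ⟨↑(PowerSeries.trunc n f.val), poly_tate hK0 _⟩ - N f)
    (fun n => by rw [Real.norm_eq_abs]; exact habs n)
    (gauss_tail_tendsto hp hK0 hKbot hKmul f.2)
  have h4 := h0.add (tendsto_const_nhds (x := N f))
  rw [zero_add] at h4
  simpa using h4

lemma N_unique {N N' : {f : PowerSeries K // IsTate vK f} → ℝ}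
    (hN : IsBddMultSeminorm p vK N) (hN' : IsBddMultSeminorm p vK N')
    (hagree : ∀ (q : Polynomial K) (hq : IsTate vK (↑q : PowerSeries K)),
      N ⟨↑q, hq⟩ = N' ⟨↑q, hq⟩) : N = N' := by
  funext f
  refine tendsto_nhds_unique (N_trunc_tendsto hp hK0 hKbot hKmul hN f)
    (((N_trunc_tendsto hp hK0 hKbot hKmul hN' f)).congr fun n => (hagree _ _).symm)

end U

end Stmt4Aux

namespace Stmt4Aux

set_option linter.unusedSectionVars false

variable {K : Type*} [Field K] {vK : K → EReal} {p : ℕ} {v : Polynomial K → EReal}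

section Phi
variable
  (hp : 1 < (p : ℝ))
  (hK0 : ∀ x : K, vK x = ⊤ ↔ x = 0)
  (hKbot : ∀ x : K, vK x ≠ ⊥)
  (hKmul : ∀ x y : K, vK (x * y) = vK x + vK y)
include hp hK0 hKbot hKmul

lemma gauss_X_le_one : gaussNorm p vK (↑(X : Polynomial K) : PowerSeries K) ≤ 1 := by
  refine ciSup_le fun j => ?_
  rw [Polynomial.coeff_coe]
  by_cases hj : j = 1
  · subst hj
    rw [Polynomial.coeff_X_one, if_neg one_ne_zero, vK_one hK0 hKbot hKmul]
    simp
  · rw [Polynomial.coeff_X_of_ne_one hj, if_pos rfl]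
    norm_num

lemma vOfN_isPV {N : {f : PowerSeries K // IsTate vK f} → ℝ}
    (hN : IsBddMultSeminorm p vK N) :
    IsPseudoValuation vK (fun f : Polynomial K =>
      if N ⟨↑f, poly_tate hK0 f⟩ = 0 then (⊤ : EReal)
      else ((-Real.logb p (N ⟨↑f, poly_tate hK0 f⟩) : ℝ) : EReal)) := by
  obtain ⟨hN1, hNone, hNzero, hNmul, hNadd, hNgauss, hNconst⟩ := hN
  refine ⟨?_, ?_, ?_, ?_⟩
  · simp only
    split_ifs with h
    · exact le_top
    · rw [← EReal.coe_zero, EReal.coe_le_coe_iff]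
      have hX : N ⟨↑(X : Polynomial K), poly_tate hK0 X⟩ ≤ 1 :=
        le_trans (hNgauss _) (gauss_X_le_one hp hK0 hKbot hKmul)
      have := Real.logb_nonpos hp (hN1 _) hX
      linarith
  · intro f g
    simp only
    have hfg : N ⟨↑(f + g), poly_tate hK0 (f + g)⟩ ≤
        max (N ⟨↑f, poly_tate hK0 f⟩) (N ⟨↑g, poly_tate hK0 g⟩) :=
      hNadd _ _ _ (Polynomial.coe_add f g)
    by_cases h : N ⟨↑(f + g), poly_tate hK0 (f + g)⟩ = 0
    · rw [if_pos h]; exact le_top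
    · rw [if_neg h]
      have hpos : 0 < N ⟨↑(f + g), poly_tate hK0 (f + g)⟩ := (hN1 _).lt_of_ne (Ne.symm h)
      rcases max_cases (N ⟨↑f, poly_tate hK0 f⟩) (N ⟨↑g, poly_tate hK0 g⟩) with
        ⟨hm, -⟩ | ⟨hm, -⟩
      · rw [hm] at hfg
        have hNf : N ⟨↑f, poly_tate hK0 f⟩ ≠ 0 := (lt_of_lt_of_le hpos hfg).ne'
        refine le_trans (min_le_left _ _) ?_
        rw [if_neg hNf, EReal.coe_le_coe_iff]
        have := (Real.logb_le_logb hp hpos (lt_of_lt_of_le hpos hfg)).2 hfg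
        linarith
      · rw [hm] at hfg
        have hNg : N ⟨↑g, poly_tate hK0 g⟩ ≠ 0 := (lt_of_lt_of_le hpos hfg).ne'
        refine le_trans (min_le_right _ _) ?_
        rw [if_neg hNg, EReal.coe_le_coe_iff]
        have := (Real.logb_le_logb hp hpos (lt_of_lt_of_le hpos hfg)).2 hfg
        linarith
  · intro f g
    simp only
    have hm : N ⟨↑(f * g), poly_tate hK0 (f * g)⟩ =
        N ⟨↑f, poly_tate hK0 f⟩ * N ⟨↑g, poly_tate hK0 g⟩ :=
      hNmul _ _ _ (Polynomial.coe_mul f g)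
    by_cases h1 : N ⟨↑f, poly_tate hK0 f⟩ = 0
    · rw [if_pos (by rw [hm, h1, zero_mul]), if_pos h1, EReal.top_add_of_ne_bot]
      split_ifs
      · simp
      · exact EReal.coe_ne_bot _
    by_cases h2 : N ⟨↑g, poly_tate hK0 g⟩ = 0
    · rw [if_pos (by rw [hm, h2, mul_zero]), if_neg h1, if_pos h2,
        EReal.add_top_of_ne_bot (EReal.coe_ne_bot _)]
    · rw [if_neg (by rw [hm]; exact mul_ne_zero h1 h2), if_neg h1, if_neg h2,
        ← EReal.coe_add]
      congr 1
      rw [hm, Real.logb_mul h1 h2]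
      ring
  · intro c
    simp only
    by_cases hc : c = 0
    · subst hc
      rw [if_pos (hNzero _ (show ((C (0 : K) : Polynomial K) : PowerSeries K) = 0 by
        rw [map_zero, Polynomial.coe_zero])), vK_zero hK0]
    · have hval : N ⟨↑(C c), poly_tate hK0 (C c)⟩ = (p : ℝ) ^ (-(vK c).toReal) :=
        hNconst _ c hc (Polynomial.coe_C c)
      have hne : N ⟨↑(C c), poly_tate hK0 (C c)⟩ ≠ 0 := by
        rw [hval]; exact (Real.rpow_pos_of_pos (ppos hp) _).ne'
      rw [if_neg hne, hval, Real.logb_rpow (ppos hp) (ne_of_gt hp), neg_neg]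
      exact EReal.coe_toReal (fun ht => hc ((hK0 c).1 ht)) (hKbot c)

lemma PhiPsi (hv : IsPseudoValuation vK v) (f : Polynomial K)
    (hf : IsTate vK (↑f : PowerSeries K)) :
    (if NvFun p vK v ⟨↑f, hf⟩ = 0 then (⊤ : EReal)
      else ((-Real.logb p (NvFun p vK v ⟨↑f, hf⟩) : ℝ) : EReal)) = v f := by
  rw [NvFun_poly hp hK0 hKbot hKmul hv f hf]
  by_cases h : v f = ⊤
  · rw [if_pos ((npoly_eq_zero_iff hp).2 h), h]
  · rw [if_neg (fun hh => h ((npoly_eq_zero_iff hp).1 hh)), npoly_of_ne_top h,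
      Real.logb_rpow (ppos hp) (ne_of_gt hp), neg_neg]
    exact EReal.coe_toReal h (v_ne_bot hK0 hKbot hKmul hv f)

lemma PsiPhi {N : {f : PowerSeries K // IsTate vK f} → ℝ}
    (hN : IsBddMultSeminorm p vK N) (f : Polynomial K)
    (hf : IsTate vK (↑f : PowerSeries K)) :
    npoly p (fun f : Polynomial K =>
      if N ⟨↑f, poly_tate hK0 f⟩ = 0 then (⊤ : EReal)
      else ((-Real.logb p (N ⟨↑f, poly_tate hK0 f⟩) : ℝ) : EReal)) f = N ⟨↑f, hf⟩ := by
  have heq : (⟨↑f, hf⟩ : {f : PowerSeries K // IsTate vK f}) = ⟨↑f, poly_tate hK0 f⟩ := rfl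
  rw [heq]
  by_cases h : N ⟨↑f, poly_tate hK0 f⟩ = 0
  · rw [npoly_of_eq_top (if_pos h), h]
  · rw [npoly_of_ne_top (show (if N ⟨↑f, poly_tate hK0 f⟩ = 0 then (⊤ : EReal)
        else ((-Real.logb p (N ⟨↑f, poly_tate hK0 f⟩) : ℝ) : EReal)) ≠ ⊤ by
      rw [if_neg h]; exact EReal.coe_ne_top _)]
    simp only [if_neg h, EReal.toReal_coe, neg_neg]
    exact Real.rpow_logb (ppos hp) (ne_of_gt hp) ((hN.1 _).lt_of_ne (Ne.symm h))

lemma NvFun_isBdd (hKadd : ∀ x y : K, min (vK x) (vK y) ≤ vK (x + y))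
    (hv : IsPseudoValuation vK v) : IsBddMultSeminorm p vK (NvFun p vK v) :=
  ⟨NvFun_nonneg hp hK0 hKbot hKmul hv,
   fun f h => NvFun_one hp hK0 hKbot hKmul hv f h,
   fun f h => NvFun_zero hp hK0 hKbot hKmul hv f h,
   fun f g h hh => NvFun_mul hp hK0 hKbot hKmul hv hKadd f g h hh,
   fun f g h hh => NvFun_add hp hK0 hKbot hKmul hv f g h hh,
   fun f => NvFun_le_gauss hp hK0 hKbot hKmul hv f,
   fun f c hc h => NvFun_const hp hK0 hKbot hKmul hv f c hc h⟩

end Phi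

end Stmt4Aux

open Stmt4Aux

/-- Pseudo-valuations on `K[T]` correspond bijectively to bounded
multiplicative semi-norms on the Tate algebra `K⟨T⟩`: every such semi-norm
restricts, via `f ↦ -log_p ‖f‖`, to a pseudo-valuation on `K[T]`; conversely
every pseudo-valuation extends uniquely by continuity (agreement on the dense
subring of polynomials determines the semi-norm) to a bounded multiplicative
semi-norm, and these two maps are mutually inverse bijections. -/
theorem stmt4 (p : ℕ) [Fact p.Prime] (K : Type*) [Field K] [Algebra ℚ_[p] K]
    [FiniteDimensional ℚ_[p] K]
    (vK : K → EReal)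
    (hK0 : ∀ x : K, vK x = ⊤ ↔ x = 0)
    (hKbot : ∀ x : K, vK x ≠ ⊥)
    (hKmul : ∀ x y : K, vK (x * y) = vK x + vK y)
    (hKadd : ∀ x y : K, min (vK x) (vK y) ≤ vK (x + y))
    (hKp : vK ((p : ℚ_[p]) • (1 : K)) = 1) :
    ∃ Φ : {N : {f : PowerSeries K // IsTate vK f} → ℝ // IsBddMultSeminorm p vK N} →
          {v : Polynomial K → EReal // IsPseudoValuation vK v},
    ∃ Ψ : {v : Polynomial K → EReal // IsPseudoValuation vK v} →
          {N : {f : PowerSeries K // IsTate vK f} → ℝ // IsBddMultSeminorm p vK N},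
      (∀ N (f : Polynomial K) (hf : IsTate vK (f : PowerSeries K)),
        (Φ N).val f =
          if N.val ⟨(f : PowerSeries K), hf⟩ = 0 then (⊤ : EReal)
          else ((-Real.logb p (N.val ⟨(f : PowerSeries K), hf⟩) : ℝ) : EReal)) ∧
      Function.LeftInverse Ψ Φ ∧
      Function.RightInverse Ψ Φ ∧
      (∀ N N' : {N : {f : PowerSeries K // IsTate vK f} → ℝ // IsBddMultSeminorm p vK N},
        (∀ (f : Polynomial K) (hf : IsTate vK (f : PowerSeries K)),
          N.val ⟨(f : PowerSeries K), hf⟩ = N'.val ⟨(f : PowerSeries K), hf⟩) →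
        N = N') := by
  have hp : 1 < (p : ℝ) := by exact_mod_cast (Fact.out : p.Prime).one_lt
  refine ⟨fun N => ⟨fun f => if N.val ⟨(↑f : PowerSeries K), poly_tate hK0 f⟩ = 0
      then (⊤ : EReal)
      else ((-Real.logb p (N.val ⟨(↑f : PowerSeries K), poly_tate hK0 f⟩) : ℝ) : EReal),
      vOfN_isPV hp hK0 hKbot hKmul N.2⟩,
    fun v => ⟨NvFun p vK v.val, NvFun_isBdd hp hK0 hKbot hKmul hKadd v.2⟩,
    ?_, ?_, ?_, ?_⟩
  · intro N f hf
    rfl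
  · intro N
    apply Subtype.ext
    refine N_unique hp hK0 hKbot hKmul
      (NvFun_isBdd hp hK0 hKbot hKmul hKadd (vOfN_isPV hp hK0 hKbot hKmul N.2)) N.2
      fun q hq => ?_
    exact (NvFun_poly hp hK0 hKbot hKmul (vOfN_isPV hp hK0 hKbot hKmul N.2)
      q hq).trans (PsiPhi hp hK0 hKbot hKmul N.2 q hq)
  · intro v
    apply Subtype.ext
    funext f
    exact PhiPsi hp hK0 hKbot hKmul v.2 f (poly_tate hK0 f)
  · intro N N' hagree
    apply Subtype.ext
    exact N_unique hp hK0 hKbot hKmul N.2 N'.2 fun q hq => hagree q hq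
end

section
/- Let v be a pseudo-valuation on K[T], φ a key polynomial over v, and λ > v(φ). Then the augmentation w defined by w(f) = min_{0≤i≤m} (v(a_i) + iλ), where f = Σ_{i=0}^m a_i φ^i is the φ-adic expansion of f, is again a pseudo-valuation on K[T]. -/
open Polynomial

/-- `f ∼_v g` iff `v(f-g) > v(f)`, or `f = g = 0`. -/
def VEquiv {K : Type*} [Field K] (v : Polynomial K → EReal)
    (f g : Polynomial K) : Prop :=
  v f < v (f - g) ∨ (f = 0 ∧ g = 0)

/-- `g |_v f` iff `f ∼_v q·g` for some `q`. -/
def VDvd {K : Type*} [Field K] (v : Polynomial K → EReal)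
    (g f : Polynomial K) : Prop :=
  ∃ q : Polynomial K, VEquiv v f (q * g)

/-- A key polynomial over `v`: a monic, non-constant, `v`-irreducible and
`v`-minimal polynomial. -/
def IsKeyPolynomial {K : Type*} [Field K] (v : Polynomial K → EReal)
    (φ : Polynomial K) : Prop :=
  φ.Monic ∧ 0 < φ.natDegree ∧
  (∀ f g : Polynomial K, VDvd v φ (f * g) → VDvd v φ f ∨ VDvd v φ g) ∧
  (∀ f : Polynomial K, f ≠ 0 → VDvd v φ f → φ.degree ≤ f.degree)

namespace ML5


lemma nsmul_ne_bot {x : EReal} (hx : x ≠ ⊥) : ∀ n : ℕ, (n • x : EReal) ≠ ⊥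
  | 0 => by simp
  | n+1 => by
    rw [succ_nsmul]
    simp only [ne_eq, EReal.add_eq_bot_iff, not_or]
    exact ⟨nsmul_ne_bot hx n, hx⟩

lemma add_ne_top' {x y : EReal} (hx : x ≠ ⊤) (hy : y ≠ ⊤) : x + y ≠ ⊤ :=
  (EReal.add_lt_top hx hy).ne

lemma nsmul_ne_top {x : EReal} (hx : x ≠ ⊤) : ∀ n : ℕ, (n • x : EReal) ≠ ⊤
  | 0 => by simp
  | n+1 => by
    rw [succ_nsmul]
    exact add_ne_top' (nsmul_ne_top hx n) hx

lemma nsmul_top_of_pos {n : ℕ} (hn : 0 < n) : (n • (⊤ : EReal)) = ⊤ := by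
  obtain ⟨m, rfl⟩ := Nat.exists_eq_succ_of_ne_zero hn.ne'
  rw [succ_nsmul]
  exact EReal.add_top_of_ne_bot (nsmul_ne_bot (by simp) m)

lemma add_lt_add_mixed {a b x y : EReal} (hb : b ≠ ⊥) (hb' : b ≠ ⊤)
    (hx : a < x) (hy : b ≤ y) : a + b < x + y :=
  EReal.add_lt_add_of_lt_of_le' hx hy
    (fun h => hb (le_bot_iff.mp (h ▸ hy))) (fun _ hz => absurd hz hb')

lemma ne_top_of_add_ne_top_left {x y : EReal} (h : x + y ≠ ⊤) (hy : y ≠ ⊥) : x ≠ ⊤ := by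
  intro hx
  rw [hx, EReal.top_add_of_ne_bot hy] at h
  exact h rfl

lemma ne_top_of_add_ne_top_right {x y : EReal} (h : x + y ≠ ⊤) (hx : x ≠ ⊥) : y ≠ ⊤ := by
  intro hy
  rw [hy, EReal.add_top_of_ne_bot hx] at h
  exact h rfl

lemma add_ne_top {x y : EReal} (hx : x ≠ ⊤) (hy : y ≠ ⊤) : x + y ≠ ⊤ :=
  (EReal.add_lt_top hx hy).ne

lemma lt_of_add_lt_add_right' {a b c : EReal} (h : a + c < b + c) : a < b := by
  by_contra hab
  push_neg at hab
  exact absurd (add_le_add_left hab c) (not_le.mpr h)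

lemma ereal_self_eq_add_self {a : EReal} (hbot : a ≠ ⊥) (htop : a ≠ ⊤) (h : a = a + a) :
    a = 0 := by
  lift a to ℝ using ⟨htop, hbot⟩
  rw [← EReal.coe_add, EReal.coe_eq_coe_iff] at h
  norm_cast
  linarith

lemma ereal_add_self_eq_zero {a : EReal} (hbot : a ≠ ⊥) (htop : a ≠ ⊤) (h : a + a = 0) :
    a = 0 := by
  lift a to ℝ using ⟨htop, hbot⟩
  rw [← EReal.coe_add] at h
  norm_cast at h ⊢
  linarith

variable {K : Type*} [Field K] {v : Polynomial K → EReal}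

lemma v_strict_min (hadd : ∀ f g : Polynomial K, min (v f) (v g) ≤ v (f + g))
    (hneg : ∀ f : Polynomial K, v (-f) = v f)
    {a b : Polynomial K} (h : v a < v b) : v (a + b) = v a := by
  refine le_antisymm ?_ (le_trans (le_min le_rfl h.le) (hadd a b))
  by_contra hlt
  push_neg at hlt
  have h2 : min (v (a + b)) (v (-b)) ≤ v (a + b + -b) := hadd _ _
  rw [hneg, add_neg_cancel_right] at h2
  exact absurd h2 (not_le.mpr (lt_min hlt h))

lemma inf_le_v_sum (hadd : ∀ f g : Polynomial K, min (v f) (v g) ≤ v (f + g))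
    (h0 : v 0 = ⊤) {ι : Type*} (s : Finset ι) (h : ι → Polynomial K) :
    s.inf (fun i => v (h i)) ≤ v (∑ i ∈ s, h i) := by
  classical
  induction s using Finset.induction with
  | empty => simp [h0]
  | insert _ _ ha ih =>
    rw [Finset.sum_insert ha, Finset.inf_insert]
    exact le_trans (min_le_min le_rfl ih) (hadd _ _)

/-- the `i`-th coefficient of the `φ`-adic expansion -/
noncomputable def coefφ (φ : Polynomial K) : ℕ → Polynomial K → Polynomial K
  | 0, f => f %ₘ φ
  | (i+1), f => coefφ φ i (f /ₘ φ)

lemma coefφ_deg_lt {φ : Polynomial K} (hm : φ.Monic) :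
    ∀ (i : ℕ) (f : Polynomial K), (coefφ φ i f).degree < φ.degree
  | 0, f => degree_modByMonic_lt f hm
  | (i+1), f => coefφ_deg_lt hm i (f /ₘ φ)

lemma coefφ_sum {φ : Polynomial K} (hm : φ.Monic) (hd : 0 < φ.natDegree) :
    ∀ (m : ℕ) (f : Polynomial K), f.natDegree < (m + 1) * φ.natDegree →
      f = ∑ i ∈ Finset.range (m + 1), coefφ φ i f * φ ^ i
  | 0, f, h => by
    have : f %ₘ φ = f := (modByMonic_eq_self_iff hm).mpr (degree_lt_degree (by simpa using h))
    simp [coefφ, this]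
  | (m+1), f, h => by
    have hq : (f /ₘ φ).natDegree < (m + 1) * φ.natDegree := by
      rw [natDegree_divByMonic f hm]
      rcases le_or_gt f.natDegree φ.natDegree with h1 | h1
      · have : f.natDegree - φ.natDegree = 0 := Nat.sub_eq_zero_of_le h1
        rw [this]
        positivity
      · have := h
        rw [Nat.sub_lt_iff_lt_add (le_of_lt h1)]
        calc f.natDegree < (m + 2) * φ.natDegree := h
        _ = (m + 1) * φ.natDegree + φ.natDegree := by ring
    have IH := coefφ_sum hm hd m (f /ₘ φ) hq
    calc f = f %ₘ φ + φ * (f /ₘ φ) := (modByMonic_add_div f φ).symm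
    _ = ∑ i ∈ Finset.range (m + 2), coefφ φ i f * φ ^ i := by
        rw [Finset.sum_range_succ']
        simp only [coefφ, pow_succ]
        nth_rewrite 1 [IH]
        rw [Finset.mul_sum]
        rw [add_comm]
        congr 1
        · apply Finset.sum_congr rfl
          intro i _
          ring
        · ring

/-- the key "small-degree multiplication" lemma -/
lemma small_mul {φ : Polynomial K}
    (hvadd : ∀ f g : Polynomial K, min (v f) (v g) ≤ v (f + g))
    (hvmul : ∀ f g : Polynomial K, v (f * g) = v f + v g)
    (hv0 : v 0 = ⊤)
    (hvneg : ∀ f : Polynomial K, v (-f) = v f)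
    (hmon : φ.Monic)
    (hirr : ∀ f g : Polynomial K, VDvd v φ (f * g) → VDvd v φ f ∨ VDvd v φ g)
    (hmin : ∀ f : Polynomial K, f ≠ 0 → VDvd v φ f → φ.degree ≤ f.degree)
    {a b : Polynomial K} (ha : a.degree < φ.degree) (hb : b.degree < φ.degree) :
    v ((a * b) %ₘ φ) = v a + v b ∧ v a + v b ≤ v ((a * b) /ₘ φ) + v φ := by
  have hndvd : ∀ h : Polynomial K, h ≠ 0 → h.degree < φ.degree → ¬ VDvd v φ h :=
    fun h h0 hdeg hd => absurd (hmin h h0 hd) (not_le.mpr hdeg)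
  have hPsum : (a * b) %ₘ φ + φ * ((a * b) /ₘ φ) = a * b := modByMonic_add_div (a * b) φ
  have hvP : v (a * b) = v a + v b := hvmul a b
  -- Step A : v (a*b) ≤ v r
  have hrP : v (a * b) ≤ v ((a * b) %ₘ φ) := by
    by_contra hc
    push_neg at hc
    have hr0 : (a * b) %ₘ φ ≠ 0 := by
      rintro h0
      rw [h0, hv0] at hc
      exact absurd hc not_top_lt
    refine hndvd _ hr0 (degree_modByMonic_lt _ hmon) ⟨-((a * b) /ₘ φ), Or.inl ?_⟩
    have he : (a * b) %ₘ φ - -((a * b) /ₘ φ) * φ = a * b := by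
      linear_combination hPsum
    rw [he]
    exact hc
  -- Step B : v r ≤ v (φ * q)
  have hrq : v ((a * b) %ₘ φ) ≤ v (φ * ((a * b) /ₘ φ)) := by
    by_contra hc
    push_neg at hc
    have hPeq : v (a * b) = v (φ * ((a * b) /ₘ φ)) := by
      have h' : v ((a * b) %ₘ φ + φ * ((a * b) /ₘ φ)) = v (φ * ((a * b) /ₘ φ)) := by
        rw [add_comm]
        exact v_strict_min hvadd hvneg hc
      rw [hPsum] at h'
      exact h' 
    have hdvd : VDvd v φ (a * b) := by
      refine ⟨(a * b) /ₘ φ, Or.inl ?_⟩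
      have he : a * b - (a * b) /ₘ φ * φ = (a * b) %ₘ φ := by
        linear_combination -hPsum
      rw [he, hPeq]
      exact hc
    have ha0 : a ≠ 0 := by
      rintro rfl
      simp only [zero_mul, Polynomial.zero_modByMonic, Polynomial.zero_divByMonic,
        mul_zero, hv0] at hc
      exact not_top_lt hc
    have hb0 : b ≠ 0 := by
      rintro rfl
      simp only [mul_zero, Polynomial.zero_modByMonic, Polynomial.zero_divByMonic,
        hv0] at hc
      exact not_top_lt hc
    rcases hirr a b hdvd with h | h
    · exact hndvd a ha0 ha h
    · exact hndvd b hb0 hb h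
  -- combine
  have hmin' : min (v ((a * b) %ₘ φ)) (v (φ * ((a * b) /ₘ φ))) ≤ v (a * b) := by
    have := hvadd ((a * b) %ₘ φ) (φ * ((a * b) /ₘ φ))
    rw [hPsum] at this
    exact this
  rw [min_eq_left hrq] at hmin'
  have hvr : v ((a * b) %ₘ φ) = v a + v b := le_antisymm (hvP ▸ hmin') (hvP ▸ hrP)
  refine ⟨hvr, ?_⟩
  calc v a + v b = v ((a * b) %ₘ φ) := hvr.symm
  _ ≤ v (φ * ((a * b) /ₘ φ)) := hrq
  _ = v ((a * b) /ₘ φ) + v φ := by rw [hvmul]; exact add_comm _ _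

end ML5

/-- MacLane augmentation: if `v` is a pseudo-valuation on `K[T]` (`K` a finite
extension of `ℚ_p` with `p`-adic valuation `vK`), `φ` a key polynomial over
`v` and `λ > v(φ)`, then the map `w` sending `f = Σ a_i φ^i` (the `φ`-adic
expansion) to `min_i (v(a_i) + i·λ)` is again a pseudo-valuation. -/
theorem stmt5 (p : ℕ) [Fact p.Prime] (K : Type*) [Field K] [Algebra ℚ_[p] K]
    [FiniteDimensional ℚ_[p] K]
    (vK : K → EReal)
    (hK0 : ∀ x : K, vK x = ⊤ ↔ x = 0)
    (hKbot : ∀ x : K, vK x ≠ ⊥)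
    (hKmul : ∀ x y : K, vK (x * y) = vK x + vK y)
    (hKadd : ∀ x y : K, min (vK x) (vK y) ≤ vK (x + y))
    (hKp : vK ((p : ℚ_[p]) • (1 : K)) = 1)
    (v : Polynomial K → EReal) (hv : IsPseudoValuation vK v)
    (φ : Polynomial K) (hφ : IsKeyPolynomial v φ)
    (lam : EReal) (hlam : v φ < lam)
    (w : Polynomial K → EReal)
    (hw : ∀ (f : Polynomial K) (m : ℕ) (a : ℕ → Polynomial K),
      (∀ i, i ≤ m → (a i).degree < φ.degree) →
      f = ∑ i ∈ Finset.range (m + 1), a i * φ ^ i →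
      w f = ⨅ i ∈ Finset.range (m + 1), (v (a i) + i • lam)) :
    IsPseudoValuation vK w := by
  
  classical
  obtain ⟨hvX, hvadd, hvmul, hvC⟩ := hv
  obtain ⟨hmon, hdpos, hirr, hmin⟩ := hφ
  have hφne : φ ≠ 0 := hmon.ne_zero
  have hdeg0 : (0 : WithBot ℕ) < φ.degree := natDegree_pos_iff_degree_pos.mp hdpos
  have hvK1 : vK 1 = 0 := by
    refine ML5.ereal_self_eq_add_self (hKbot 1) (fun h => one_ne_zero ((hK0 1).mp h)) ?_
    rw [← hKmul]; norm_num
  have hv1 : v (1 : Polynomial K) = 0 := by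
    rw [show (1 : Polynomial K) = C 1 from (map_one C).symm, hvC, hvK1]
  have hv0 : v (0 : Polynomial K) = ⊤ := by
    rw [show (0 : Polynomial K) = C 0 from (map_zero C).symm, hvC]
    exact (hK0 0).mpr rfl
  have hvbot : ∀ f : Polynomial K, v f ≠ ⊥ := by
    intro f hbot
    have h := hvmul 0 f
    rw [zero_mul, hv0, hbot, EReal.add_bot] at h
    exact (by simp : (⊤ : EReal) ≠ ⊥) h
  have hvKneg1 : vK (-1 : K) = 0 := by
    refine ML5.ereal_add_self_eq_zero (hKbot _)
      (fun h => (by norm_num : (-1 : K) ≠ 0) ((hK0 _).mp h)) ?_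
    rw [← hKmul]; norm_num [hvK1]
  have hvneg : ∀ f : Polynomial K, v (-f) = v f := by
    intro f
    rw [show -f = C (-1 : K) * f by simp, hvmul, hvC, hvKneg1, zero_add]
  have hφbot : v φ ≠ ⊥ := hvbot φ
  have hφtop : v φ ≠ ⊤ := hlam.ne_top
  have hlambot : lam ≠ ⊥ := by
    intro h
    rw [h] at hlam
    exact absurd hlam (by simp)
  have hwrep : ∀ (f : Polynomial K) (m : ℕ) (a : ℕ → Polynomial K),
      (∀ i, i ≤ m → (a i).degree < φ.degree) →
      f = ∑ i ∈ Finset.range (m + 1), a i * φ ^ i →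
      w f = (Finset.range (m + 1)).inf (fun i => v (a i) + i • lam) := by
    intro f m a h1 h2
    rw [hw f m a h1 h2]
    exact (Finset.inf_eq_iInf _ _).symm
  have hwchar : ∀ (f : Polynomial K) (m : ℕ), f.natDegree < (m + 1) * φ.natDegree →
      w f = (Finset.range (m + 1)).inf (fun i => v (ML5.coefφ φ i f) + i • lam) :=
    fun f m hm => hwrep f m _ (fun i _ => ML5.coefφ_deg_lt hmon i f)
      (ML5.coefφ_sum hmon hdpos m f hm)
  have hdegbig : ∀ f : Polynomial K, f.natDegree < (f.natDegree + 1) * φ.natDegree := by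
    intro f
    calc f.natDegree < f.natDegree + 1 := Nat.lt_succ_self _
    _ ≤ (f.natDegree + 1) * φ.natDegree := Nat.le_mul_of_pos_right _ hdpos
  refine ⟨?_, ?_, ?_, ?_⟩
  · -- 0 ≤ w X
    rcases lt_or_ge 1 φ.natDegree with h1 | h1
    · have hXdeg : (X : Polynomial K).degree < φ.degree :=
        degree_lt_degree (by simpa [natDegree_X] using h1)
      rw [hwrep X 0 (fun _ => X) (fun i _ => hXdeg)
        (by rw [Finset.sum_range_one, pow_zero, mul_one])]
      rw [Finset.range_one, Finset.inf_singleton]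
      simpa using hvX
    · have h1' : φ.natDegree = 1 := le_antisymm h1 hdpos
      have hc := hmon.eq_X_add_C h1'
      have hvKc : 0 ≤ vK (φ.coeff 0) := by
        by_contra hneg
        push_neg at hneg
        have hc0 : φ.coeff 0 ≠ 0 := by
          rintro h0
          rw [h0, (hK0 0).mpr rfl] at hneg
          exact not_top_lt hneg
        have hinv : vK (φ.coeff 0) + vK (φ.coeff 0)⁻¹ = 0 := by
          rw [← hKmul, mul_inv_cancel₀ hc0, hvK1]
        have hinvpos : 0 < vK (φ.coeff 0)⁻¹ := by
          by_contra hle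
          push_neg at hle
          have h2 : vK (φ.coeff 0) + vK (φ.coeff 0)⁻¹ ≤ vK (φ.coeff 0) + 0 :=
            add_le_add_right hle _
          rw [hinv, add_zero] at h2
          exact absurd (h2.trans_lt hneg) (lt_irrefl _)
        have hXc : C (1 : K) - C (φ.coeff 0)⁻¹ * φ = C (-(φ.coeff 0)⁻¹) * X := by
          nth_rewrite 2 [hc]
          rw [mul_add, ← C_mul, inv_mul_cancel₀ hc0, map_neg]
          ring
        have hpos : (0 : EReal) < v (C (1 : K) - C (φ.coeff 0)⁻¹ * φ) := by
          rw [hXc, hvmul, hvC]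
          have hneg1 : vK (-(φ.coeff 0)⁻¹) = vK (φ.coeff 0)⁻¹ := by
            rw [show -(φ.coeff 0)⁻¹ = -1 * (φ.coeff 0)⁻¹ by ring, hKmul, hvKneg1, zero_add]
          rw [hneg1]
          calc (0 : EReal) < vK (φ.coeff 0)⁻¹ := hinvpos
          _ = vK (φ.coeff 0)⁻¹ + 0 := (add_zero _).symm
          _ ≤ vK (φ.coeff 0)⁻¹ + v X := add_le_add_right hvX _
        have hdvd : VDvd v φ (C (1 : K)) := by
          refine ⟨C (φ.coeff 0)⁻¹, Or.inl ?_⟩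
          rw [hvC, hvK1]
          exact hpos
        have hle : φ.degree ≤ (C (1 : K)).degree := hmin _ (by simp) hdvd
        rw [degree_C one_ne_zero] at hle
        exact absurd (lt_of_lt_of_le hdeg0 hle) (lt_irrefl _)
      have hvφ0 : (0 : EReal) ≤ v φ := by
        rw [hc]
        calc (0 : EReal) ≤ min (v (X : Polynomial K)) (v (C (φ.coeff 0))) :=
          le_min hvX (by rw [hvC]; exact hvKc)
        _ ≤ v (X + C (φ.coeff 0)) := hvadd _ _
      have hlam0 : (0 : EReal) ≤ lam := le_of_lt (lt_of_le_of_lt hvφ0 hlam)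
      have e0 : ((if (0:ℕ) = 0 then C (-(φ.coeff 0)) else 1) : Polynomial K) = C (-(φ.coeff 0)) :=
        if_pos rfl
      have e1 : ((if (1:ℕ) = 0 then C (-(φ.coeff 0)) else 1) : Polynomial K) = 1 :=
        if_neg one_ne_zero
      have hrep : (X : Polynomial K) =
          ∑ i ∈ Finset.range 2, (if i = 0 then C (-(φ.coeff 0)) else 1) * φ ^ i := by
        rw [Finset.sum_range_succ, Finset.sum_range_one, e0, e1, pow_zero, pow_one, mul_one,
          one_mul, map_neg]
        nth_rewrite 2 [hc]
        ring
      rw [hwrep X 1 _ (fun i _ => ?_) hrep]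
      · rw [show Finset.range 2 = {0, 1} by rfl, Finset.inf_insert, Finset.inf_singleton]
        simp only [e0, e1, if_true, if_false, eq_self_iff_true, one_ne_zero]
        refine le_min ?_ ?_
        · rw [hvC, show vK (-(φ.coeff 0)) = vK (φ.coeff 0) by
            rw [show -(φ.coeff 0) = -1 * (φ.coeff 0) by ring, hKmul, hvKneg1, zero_add]]
          simpa using hvKc
        · rw [hv1, zero_add, one_smul]
          exact hlam0
      · split_ifs
        · exact lt_of_le_of_lt degree_C_le hdeg0
        · exact lt_of_le_of_lt degree_one.le hdeg0
  · -- additivity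
    intro f g
    obtain ⟨m, hdf, hdg⟩ : ∃ m : ℕ, f.natDegree < (m + 1) * φ.natDegree ∧
        g.natDegree < (m + 1) * φ.natDegree := by
      refine ⟨max f.natDegree g.natDegree, ?_, ?_⟩
      · calc f.natDegree ≤ max f.natDegree g.natDegree := le_max_left _ _
        _ < max f.natDegree g.natDegree + 1 := Nat.lt_succ_self _
        _ ≤ (max f.natDegree g.natDegree + 1) * φ.natDegree := Nat.le_mul_of_pos_right _ hdpos
      · calc g.natDegree ≤ max f.natDegree g.natDegree := le_max_right _ _
        _ < max f.natDegree g.natDegree + 1 := Nat.lt_succ_self _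
        _ ≤ (max f.natDegree g.natDegree + 1) * φ.natDegree := Nat.le_mul_of_pos_right _ hdpos
    have hf := hwchar f m hdf
    have hg := hwchar g m hdg
    have hrep : f + g = ∑ i ∈ Finset.range (m + 1),
        (ML5.coefφ φ i f + ML5.coefφ φ i g) * φ ^ i := by
      conv_lhs => rw [ML5.coefφ_sum hmon hdpos m f hdf, ML5.coefφ_sum hmon hdpos m g hdg]
      rw [← Finset.sum_add_distrib]
      exact Finset.sum_congr rfl fun i _ => by ring
    rw [hwrep (f + g) m _
      (fun i _ => lt_of_le_of_lt (degree_add_le _ _)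
        (max_lt (ML5.coefφ_deg_lt hmon i f) (ML5.coefφ_deg_lt hmon i g))) hrep]
    refine Finset.le_inf fun i hi => ?_
    calc min (w f) (w g)
        ≤ min (v (ML5.coefφ φ i f) + i • lam) (v (ML5.coefφ φ i g) + i • lam) :=
          min_le_min (hf.le.trans (Finset.inf_le hi)) (hg.le.trans (Finset.inf_le hi))
      _ = min (v (ML5.coefφ φ i f)) (v (ML5.coefφ φ i g)) + i • lam := min_add_add_right _ _ _
      _ ≤ v (ML5.coefφ φ i f + ML5.coefφ φ i g) + i • lam := add_le_add_left (hvadd _ _) _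
  · -- multiplicativity
    intro f g
    obtain ⟨mf, A, hAdeg, hAf⟩ : ∃ (m : ℕ) (A : ℕ → Polynomial K),
        (∀ i, (A i).degree < φ.degree) ∧ f = ∑ i ∈ Finset.range (m + 1), A i * φ ^ i :=
      ⟨f.natDegree, fun i => ML5.coefφ φ i f, fun i => ML5.coefφ_deg_lt hmon i f,
        ML5.coefφ_sum hmon hdpos f.natDegree f (hdegbig f)⟩
    obtain ⟨mg, B, hBdeg, hBf⟩ : ∃ (m : ℕ) (B : ℕ → Polynomial K),
        (∀ j, (B j).degree < φ.degree) ∧ g = ∑ j ∈ Finset.range (m + 1), B j * φ ^ j :=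
      ⟨g.natDegree, fun j => ML5.coefφ φ j g, fun j => ML5.coefφ_deg_lt hmon j g,
        ML5.coefφ_sum hmon hdpos g.natDegree g (hdegbig g)⟩
    have hf : w f = (Finset.range (mf + 1)).inf (fun i => v (A i) + i • lam) :=
      hwrep f mf A (fun i _ => hAdeg i) hAf
    have hg : w g = (Finset.range (mg + 1)).inf (fun j => v (B j) + j • lam) :=
      hwrep g mg B (fun j _ => hBdeg j) hBf
    have hRQ : ∀ p : ℕ × ℕ, v ((A p.1 * B p.2) %ₘ φ) = v (A p.1) + v (B p.2) ∧
        v (A p.1) + v (B p.2) ≤ v ((A p.1 * B p.2) /ₘ φ) + v φ :=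
      fun p => ML5.small_mul hvadd hvmul hv0 hvneg hmon hirr hmin (hAdeg p.1) (hBdeg p.2)
    set I : Finset (ℕ × ℕ) := Finset.range (mf + 1) ×ˢ Finset.range (mg + 1) with hI
    set M : ℕ := mf + mg + 1 with hM
    set S : ℕ × ℕ → ℕ → Polynomial K := fun p k =>
      (if p.1 + p.2 = k then (A p.1 * B p.2) %ₘ φ else 0) +
      (if p.1 + p.2 + 1 = k then (A p.1 * B p.2) /ₘ φ else 0) with hS
    have hqdeg : ∀ i j : ℕ, ((A i * B j) /ₘ φ).degree < φ.degree := by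
      intro i j
      apply degree_lt_degree
      rw [natDegree_divByMonic _ hmon]
      have h1 : (A i).natDegree < φ.natDegree := by
        rcases eq_or_ne (A i) 0 with h | h
        · rw [h, natDegree_zero]; exact hdpos
        · exact natDegree_lt_natDegree h (hAdeg i)
      have h2 : (B j).natDegree < φ.natDegree := by
        rcases eq_or_ne (B j) 0 with h | h
        · rw [h, natDegree_zero]; exact hdpos
        · exact natDegree_lt_natDegree h (hBdeg j)
      have h3 : (A i * B j).natDegree ≤ (A i).natDegree + (B j).natDegree := natDegree_mul_le
      omega
    have hCdeg : ∀ k : ℕ, (∑ p ∈ I, S p k).degree < φ.degree := by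
      intro k
      refine lt_of_le_of_lt (degree_sum_le _ _) ?_
      rw [Finset.sup_lt_iff (bot_lt_iff_ne_bot.mpr (fun h => hφne (degree_eq_bot.mp h)))]
      intro q hq
      rw [hS]
      refine lt_of_le_of_lt (degree_add_le _ _) (max_lt ?_ ?_)
      · split_ifs
        · exact degree_modByMonic_lt _ hmon
        · rw [degree_zero]
          exact bot_lt_iff_ne_bot.mpr (fun h => hφne (degree_eq_bot.mp h))
      · split_ifs
        · exact hqdeg q.1 q.2
        · rw [degree_zero]
          exact bot_lt_iff_ne_bot.mpr (fun h => hφne (degree_eq_bot.mp h))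
    have hsum : f * g = ∑ k ∈ Finset.range (M + 1), (∑ p ∈ I, S p k) * φ ^ k := by
      have e1 : f * g = ∑ p ∈ I, (A p.1 * B p.2) * φ ^ (p.1 + p.2) := by
        rw [hI, Finset.sum_product]
        conv_lhs => rw [hAf, hBf]
        rw [Finset.sum_mul_sum]
        refine Finset.sum_congr rfl fun i _ => Finset.sum_congr rfl fun j _ => ?_
        dsimp only
        rw [pow_add]
        ring
      have e2 : ∀ q : ℕ × ℕ, q ∈ I → (A q.1 * B q.2) * φ ^ (q.1 + q.2) =
          ∑ k ∈ Finset.range (M + 1), S q k * φ ^ k := by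
        intro q hq
        rw [hI, Finset.mem_product, Finset.mem_range, Finset.mem_range] at hq
        have hmem1 : q.1 + q.2 ∈ Finset.range (M + 1) := by
          rw [Finset.mem_range, hM]; omega
        have hmem2 : q.1 + q.2 + 1 ∈ Finset.range (M + 1) := by
          rw [Finset.mem_range, hM]; omega
        calc (A q.1 * B q.2) * φ ^ (q.1 + q.2)
            = ((A q.1 * B q.2) %ₘ φ) * φ ^ (q.1 + q.2) +
              ((A q.1 * B q.2) /ₘ φ) * φ ^ (q.1 + q.2 + 1) := by
              conv_lhs => rw [← modByMonic_add_div (A q.1 * B q.2) φ]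
              rw [pow_succ]
              ring
          _ = (∑ k ∈ Finset.range (M + 1),
                if q.1 + q.2 = k then ((A q.1 * B q.2) %ₘ φ) * φ ^ k else 0) +
              (∑ k ∈ Finset.range (M + 1),
                if q.1 + q.2 + 1 = k then ((A q.1 * B q.2) /ₘ φ) * φ ^ k else 0) := by
              rw [Finset.sum_ite_eq _ _ (fun k => ((A q.1 * B q.2) %ₘ φ) * φ ^ k), if_pos hmem1,
                Finset.sum_ite_eq _ _ (fun k => ((A q.1 * B q.2) /ₘ φ) * φ ^ k), if_pos hmem2]
          _ = ∑ k ∈ Finset.range (M + 1), S q k * φ ^ k := by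
              rw [← Finset.sum_add_distrib]
              refine Finset.sum_congr rfl fun k _ => ?_
              rw [hS]
              dsimp only
              simp only [add_mul, ite_mul, zero_mul]
      calc f * g = ∑ p ∈ I, (A p.1 * B p.2) * φ ^ (p.1 + p.2) := e1
        _ = ∑ p ∈ I, ∑ k ∈ Finset.range (M + 1), S p k * φ ^ k := Finset.sum_congr rfl e2
        _ = ∑ k ∈ Finset.range (M + 1), (∑ p ∈ I, S p k) * φ ^ k := by
            rw [Finset.sum_comm]
            exact Finset.sum_congr rfl fun k _ => (Finset.sum_mul _ _ _).symm
    have hwfg : w (f * g) =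
        (Finset.range (M + 1)).inf (fun k => v (∑ p ∈ I, S p k) + k • lam) :=
      hwrep (f * g) M _ (fun k _ => hCdeg k) hsum
    -- per-term lower bound
    have hterm : ∀ (k : ℕ) (q : ℕ × ℕ), q ∈ I → w f + w g ≤ v (S q k) + k • lam := by
      intro k q hq
      obtain ⟨hq1, hq2⟩ := Finset.mem_product.mp (hI ▸ hq)
      have hbase : w f + w g ≤ (v (A q.1) + v (B q.2)) + (q.1 + q.2) • lam := by
        calc w f + w g ≤ (v (A q.1) + q.1 • lam) + (v (B q.2) + q.2 • lam) :=
          add_le_add (hf.le.trans (Finset.inf_le hq1)) (hg.le.trans (Finset.inf_le hq2))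
        _ = (v (A q.1) + v (B q.2)) + (q.1 + q.2) • lam := by
            rw [add_nsmul, add_add_add_comm]
      have hv1' : w f + w g ≤
          v (if q.1 + q.2 = k then (A q.1 * B q.2) %ₘ φ else 0) + k • lam := by
        split_ifs with h
        · rw [(hRQ q).1, ← h]
          exact hbase
        · rw [hv0, EReal.top_add_of_ne_bot (ML5.nsmul_ne_bot hlambot k)]
          exact le_top
      have hv2' : w f + w g ≤
          v (if q.1 + q.2 + 1 = k then (A q.1 * B q.2) /ₘ φ else 0) + k • lam := by
        split_ifs with h
        · calc w f + w g ≤ (v (A q.1) + v (B q.2)) + (q.1 + q.2) • lam := hbase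
          _ ≤ (v ((A q.1 * B q.2) /ₘ φ) + v φ) + (q.1 + q.2) • lam :=
            add_le_add_left (hRQ q).2 _
          _ ≤ (v ((A q.1 * B q.2) /ₘ φ) + lam) + (q.1 + q.2) • lam :=
            add_le_add_left (add_le_add_right hlam.le _) _
          _ = v ((A q.1 * B q.2) /ₘ φ) + k • lam := by
            rw [← h, succ_nsmul, add_right_comm, ← add_assoc]
        · rw [hv0, EReal.top_add_of_ne_bot (ML5.nsmul_ne_bot hlambot k)]
          exact le_top
      calc w f + w g
          ≤ min (v (if q.1 + q.2 = k then (A q.1 * B q.2) %ₘ φ else 0) + k • lam)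
            (v (if q.1 + q.2 + 1 = k then (A q.1 * B q.2) /ₘ φ else 0) + k • lam) :=
            le_min hv1' hv2'
        _ = min (v (if q.1 + q.2 = k then (A q.1 * B q.2) %ₘ φ else 0))
            (v (if q.1 + q.2 + 1 = k then (A q.1 * B q.2) /ₘ φ else 0)) + k • lam :=
            min_add_add_right _ _ _
        _ ≤ v (S q k) + k • lam := by
            refine add_le_add_left ?_ _
            rw [hS]
            exact hvadd _ _
    have hIne : I.Nonempty := ⟨(0, 0), by rw [hI, Finset.mem_product]; simp⟩
    have hlow : w f + w g ≤ w (f * g) := by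
      rw [hwfg]
      refine Finset.le_inf fun k hk => ?_
      obtain ⟨q0, hq0, hinf⟩ := Finset.exists_mem_eq_inf I hIne (fun q => v (S q k))
      calc w f + w g ≤ v (S q0 k) + k • lam := hterm k q0 hq0
        _ ≤ v (∑ q ∈ I, S q k) + k • lam :=
          add_le_add_left (hinf ▸ ML5.inf_le_v_sum hvadd hv0 I (fun q => S q k)) _
    rcases eq_or_ne (w f + w g) ⊤ with ht | ht
    · exact le_antisymm (by rw [ht]; exact le_top) hlow
    -- upper bound
    have hwfbot : w f ≠ ⊥ := by
      rw [hf]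
      obtain ⟨i, hi, he⟩ := Finset.exists_mem_eq_inf _
        (⟨0, Finset.mem_range.mpr (Nat.succ_pos mf)⟩ : (Finset.range (mf + 1)).Nonempty)
        (fun i => v (A i) + i • lam)
      rw [he]
      exact fun hc => (EReal.add_eq_bot_iff.mp hc).elim (hvbot _) (ML5.nsmul_ne_bot hlambot i)
    have hwgbot : w g ≠ ⊥ := by
      rw [hg]
      obtain ⟨j, hj, he⟩ := Finset.exists_mem_eq_inf _
        (⟨0, Finset.mem_range.mpr (Nat.succ_pos mg)⟩ : (Finset.range (mg + 1)).Nonempty)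
        (fun j => v (B j) + j • lam)
      rw [he]
      exact fun hc => (EReal.add_eq_bot_iff.mp hc).elim (hvbot _) (ML5.nsmul_ne_bot hlambot j)
    have hwftop : w f ≠ ⊤ := ML5.ne_top_of_add_ne_top_left ht hwgbot
    have hwgtop : w g ≠ ⊤ := ML5.ne_top_of_add_ne_top_right ht hwfbot
    -- minimal indices attaining the minimum
    have hSfne : ((Finset.range (mf + 1)).filter (fun i => v (A i) + i • lam = w f)).Nonempty := by
      obtain ⟨i, hi, he⟩ := Finset.exists_mem_eq_inf _
        (⟨0, Finset.mem_range.mpr (Nat.succ_pos mf)⟩ : (Finset.range (mf + 1)).Nonempty)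
        (fun i => v (A i) + i • lam)
      exact ⟨i, Finset.mem_filter.mpr ⟨hi, (hf.trans he).symm⟩⟩
    have hSgne : ((Finset.range (mg + 1)).filter (fun j => v (B j) + j • lam = w g)).Nonempty := by
      obtain ⟨j, hj, he⟩ := Finset.exists_mem_eq_inf _
        (⟨0, Finset.mem_range.mpr (Nat.succ_pos mg)⟩ : (Finset.range (mg + 1)).Nonempty)
        (fun j => v (B j) + j • lam)
      exact ⟨j, Finset.mem_filter.mpr ⟨hj, (hg.trans he).symm⟩⟩
    set i0 := (((Finset.range (mf + 1)).filter (fun i => v (A i) + i • lam = w f)).min' hSfne)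
      with hi0def
    set j0 := (((Finset.range (mg + 1)).filter (fun j => v (B j) + j • lam = w g)).min' hSgne)
      with hj0def
    obtain ⟨hi0r, hi0v⟩ : i0 ∈ Finset.range (mf + 1) ∧ v (A i0) + i0 • lam = w f :=
      Finset.mem_filter.mp (Finset.min'_mem _ hSfne)
    obtain ⟨hj0r, hj0v⟩ : j0 ∈ Finset.range (mg + 1) ∧ v (B j0) + j0 • lam = w g :=
      Finset.mem_filter.mp (Finset.min'_mem _ hSgne)
    have hi0min : ∀ i, i ∈ Finset.range (mf + 1) → i < i0 → w f < v (A i) + i • lam := by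
      intro i hir hlt
      rcases (hf.le.trans (Finset.inf_le hir)).lt_or_eq with h | h
      · exact h
      · exact absurd (Finset.min'_le _ i (Finset.mem_filter.mpr ⟨hir, h.symm⟩))
          (not_le.mpr hlt)
    have hj0min : ∀ j, j ∈ Finset.range (mg + 1) → j < j0 → w g < v (B j) + j • lam := by
      intro j hjr hlt
      rcases (hg.le.trans (Finset.inf_le hjr)).lt_or_eq with h | h
      · exact h
      · exact absurd (Finset.min'_le _ j (Finset.mem_filter.mpr ⟨hjr, h.symm⟩))
          (not_le.mpr hlt)
    have hk0mem : i0 + j0 ∈ Finset.range (M + 1) := by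
      have h1 := Finset.mem_range.mp hi0r
      have h2 := Finset.mem_range.mp hj0r
      rw [Finset.mem_range, hM]
      omega
    -- finiteness facts
    have hAi0top : v (A i0) ≠ ⊤ :=
      ML5.ne_top_of_add_ne_top_left (fun h => hwftop (hi0v ▸ h))
        (ML5.nsmul_ne_bot hlambot i0)
    have hBj0top : v (B j0) ≠ ⊤ :=
      ML5.ne_top_of_add_ne_top_left (fun h => hwgtop (hj0v ▸ h))
        (ML5.nsmul_ne_bot hlambot j0)
    have hi0ltop : (i0 • lam : EReal) ≠ ⊤ :=
      ML5.ne_top_of_add_ne_top_right (fun h => hwftop (hi0v ▸ h)) (hvbot _)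
    have hj0ltop : (j0 • lam : EReal) ≠ ⊤ :=
      ML5.ne_top_of_add_ne_top_right (fun h => hwgtop (hj0v ▸ h)) (hvbot _)
    have hk0ltop : ((i0 + j0) • lam : EReal) ≠ ⊤ := by
      rw [add_nsmul]
      exact ML5.add_ne_top' hi0ltop hj0ltop
    have hk0lbot : ((i0 + j0) • lam : EReal) ≠ ⊥ := ML5.nsmul_ne_bot hlambot _
    -- the main term
    have hmainv : v ((A i0 * B j0) %ₘ φ) + (i0 + j0) • lam = w f + w g := by
      rw [(hRQ (i0, j0)).1, add_nsmul, add_add_add_comm, hi0v, hj0v]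
    -- strict bound on all other summands
    have hstrict : ∀ q ∈ I, q ≠ (i0, j0) →
        w f + w g < v (S q (i0 + j0)) + (i0 + j0) • lam := by
      intro q hq hne'
      obtain ⟨hq1, hq2⟩ := Finset.mem_product.mp (hI ▸ hq)
      have hp1 : w f + w g < v (if q.1 + q.2 = i0 + j0 then (A q.1 * B q.2) %ₘ φ else 0) +
          (i0 + j0) • lam := by
        split_ifs with h
        · have hor : q.1 < i0 ∨ q.2 < j0 := by
            by_contra hcon
            push_neg at hcon
            refine hne' (Prod.ext ?_ ?_) <;> omega
          rw [(hRQ q).1, ← h, add_nsmul, add_add_add_comm]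
          rcases hor with h' | h'
          · exact ML5.add_lt_add_mixed hwgbot hwgtop (hi0min q.1 hq1 h')
              (hg.le.trans (Finset.inf_le hq2))
          · rw [add_comm (w f) (w g), add_comm (v (A q.1) + q.1 • lam)]
            exact ML5.add_lt_add_mixed hwfbot hwftop (hj0min q.2 hq2 h')
              (hf.le.trans (Finset.inf_le hq1))
        · rw [hv0, EReal.top_add_of_ne_bot hk0lbot]
          exact lt_top_iff_ne_top.mpr ht
      have hp2 : w f + w g < v (if q.1 + q.2 + 1 = i0 + j0 then (A q.1 * B q.2) /ₘ φ else 0) +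
          (i0 + j0) • lam := by
        split_ifs with h
        · rcases eq_or_ne (v ((A q.1 * B q.2) /ₘ φ)) ⊤ with hqt | hqt
          · rw [hqt, EReal.top_add_of_ne_bot hk0lbot]
            exact lt_top_iff_ne_top.mpr ht
          · have hlamtop : lam ≠ ⊤ := by
              intro hc
              apply hk0ltop
              rw [hc]
              exact ML5.nsmul_top_of_pos (by omega)
            have hcltop : (v ((A q.1 * B q.2) /ₘ φ) + (q.1 + q.2) • lam) ≠ ⊤ :=
              ML5.add_ne_top' hqt (ML5.nsmul_ne_top hlamtop _)
            have hclbot : (v ((A q.1 * B q.2) /ₘ φ) + (q.1 + q.2) • lam) ≠ ⊥ := fun hc =>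
              (EReal.add_eq_bot_iff.mp hc).elim (hvbot _) (ML5.nsmul_ne_bot hlambot _)
            calc w f + w g ≤ (v (A q.1) + q.1 • lam) + (v (B q.2) + q.2 • lam) :=
                add_le_add (hf.le.trans (Finset.inf_le hq1)) (hg.le.trans (Finset.inf_le hq2))
              _ = (v (A q.1) + v (B q.2)) + (q.1 + q.2) • lam := by
                rw [add_nsmul, add_add_add_comm]
              _ ≤ (v ((A q.1 * B q.2) /ₘ φ) + v φ) + (q.1 + q.2) • lam :=
                add_le_add_left (hRQ q).2 _
              _ = v φ + (v ((A q.1 * B q.2) /ₘ φ) + (q.1 + q.2) • lam) := by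
                rw [← add_assoc, add_comm (v ((A q.1 * B q.2) /ₘ φ)) (v φ), add_assoc]
              _ < lam + (v ((A q.1 * B q.2) /ₘ φ) + (q.1 + q.2) • lam) :=
                ML5.add_lt_add_mixed hclbot hcltop hlam le_rfl
              _ = v ((A q.1 * B q.2) /ₘ φ) + (i0 + j0) • lam := by
                rw [← h, succ_nsmul, ← add_assoc, add_comm lam (v ((A q.1 * B q.2) /ₘ φ)),
                  add_assoc, add_comm lam ((q.1 + q.2) • lam), ← add_assoc]
        · rw [hv0, EReal.top_add_of_ne_bot hk0lbot]
          exact lt_top_iff_ne_top.mpr ht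
      calc w f + w g
          < min (v (if q.1 + q.2 = i0 + j0 then (A q.1 * B q.2) %ₘ φ else 0) + (i0 + j0) • lam)
            (v (if q.1 + q.2 + 1 = i0 + j0 then (A q.1 * B q.2) /ₘ φ else 0) + (i0 + j0) • lam) :=
            lt_min hp1 hp2
        _ = min (v (if q.1 + q.2 = i0 + j0 then (A q.1 * B q.2) %ₘ φ else 0))
            (v (if q.1 + q.2 + 1 = i0 + j0 then (A q.1 * B q.2) /ₘ φ else 0)) + (i0 + j0) • lam :=
            min_add_add_right _ _ _
        _ ≤ v (S q (i0 + j0)) + (i0 + j0) • lam := by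
            refine add_le_add_left ?_ _
            rw [hS]
            exact hvadd _ _
    have hstrict' : ∀ q ∈ I.erase (i0, j0), v ((A i0 * B j0) %ₘ φ) < v (S q (i0 + j0)) := by
      intro q hq
      obtain ⟨hne', hqI⟩ := Finset.mem_erase.mp hq
      have h1 := hstrict q hqI hne'
      rw [← hmainv] at h1
      exact ML5.lt_of_add_lt_add_right' h1
    have hrest : v ((A i0 * B j0) %ₘ φ) < v (∑ q ∈ I.erase (i0, j0), S q (i0 + j0)) := by
      rcases (I.erase (i0, j0)).eq_empty_or_nonempty with he | hne2
      · rw [he, Finset.sum_empty, hv0]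
        exact lt_top_iff_ne_top.mpr (ML5.ne_top_of_add_ne_top_left (hmainv ▸ ht) hk0lbot)
      · obtain ⟨q1, hq1m, hinf1⟩ := Finset.exists_mem_eq_inf _ hne2 (fun q => v (S q (i0 + j0)))
        exact lt_of_lt_of_le (hstrict' q1 hq1m)
          (hinf1 ▸ ML5.inf_le_v_sum hvadd hv0 _ (fun q => S q (i0 + j0)))
    have hS0 : S (i0, j0) (i0 + j0) = (A i0 * B j0) %ₘ φ := by
      rw [hS]
      dsimp only
      rw [if_pos rfl, if_neg (by omega), add_zero]
    have hmem0 : (i0, j0) ∈ I := by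
      rw [hI, Finset.mem_product]
      exact ⟨hi0r, hj0r⟩
    have hCceq : (∑ q ∈ I, S q (i0 + j0)) =
        (A i0 * B j0) %ₘ φ + ∑ q ∈ I.erase (i0, j0), S q (i0 + j0) := by
      rw [← hS0]
      exact (Finset.add_sum_erase I (fun q => S q (i0 + j0)) hmem0).symm
    have hCck0 : v (∑ q ∈ I, S q (i0 + j0)) = v ((A i0 * B j0) %ₘ φ) := by
      rw [hCceq]
      exact ML5.v_strict_min hvadd hvneg hrest
    refine le_antisymm ?_ hlow
    calc w (f * g) ≤ v (∑ q ∈ I, S q (i0 + j0)) + (i0 + j0) • lam :=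
        hwfg.le.trans (Finset.inf_le hk0mem)
      _ = w f + w g := by rw [hCck0, hmainv]
  · -- constants
    intro c
    rw [hwrep (C c) 0 (fun _ => C c) (fun i _ => lt_of_le_of_lt degree_C_le hdeg0)
      (by rw [Finset.sum_range_one, pow_zero, mul_one])]
    rw [Finset.range_one, Finset.inf_singleton]
    simp [hvC]
end

section
/- Let p ≥ 3 be a prime and n ≥ 2 an integer. The rational numbers k/(p^{n-1}(p-1)) - (k-t)/p^n - t/p^{n+1} (for integers 1 ≤ k ≤ 2p-1, 0 ≤ t ≤ k) are less than 2/(p^{n-1}(p-1)) if and only if: t ∈ {0,1} when k ≤ p+1 and k ∉ {2,3}; t ∈ {0,1,2} when k ∈ {2,3}; and t = 0 when p+2 ≤ k ≤ 2p-1. -/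
/-- Truncation inequality classification: for a prime `p ≥ 3`, `n ≥ 2`,
`1 ≤ k ≤ 2p-1` and `0 ≤ t ≤ k`, the exponent
`k/(p^{n-1}(p-1)) - (k-t)/p^n - t/p^{n+1}` is `< 2/(p^{n-1}(p-1))` iff
`t ≤ 1` when `k ≤ p+1`, `k ∉ {2,3}`; `t ≤ 2` when `k ∈ {2,3}`; `t = 0` when
`p+2 ≤ k ≤ 2p-1`. -/
theorem stmt11 (p n : ℕ) (hp : p.Prime) (hp3 : 3 ≤ p) (hn : 2 ≤ n)
    (k t : ℕ) (hk1 : 1 ≤ k) (hk : k ≤ 2 * p - 1) (ht : t ≤ k) :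
    ((k : ℚ) / ((p : ℚ) ^ (n - 1) * ((p : ℚ) - 1)) - ((k : ℚ) - (t : ℚ)) / (p : ℚ) ^ n
        - (t : ℚ) / (p : ℚ) ^ (n + 1) < 2 / ((p : ℚ) ^ (n - 1) * ((p : ℚ) - 1)))
      ↔ (((k = 2 ∨ k = 3) ∧ t ≤ 2) ∨
         (k ≤ p + 1 ∧ k ≠ 2 ∧ k ≠ 3 ∧ t ≤ 1) ∨
         (p + 2 ≤ k ∧ t = 0)) := by
  have hP3 : (3:ℚ) ≤ (p:ℚ) := by exact_mod_cast hp3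
  have hP0 : (0:ℚ) < (p:ℚ) := by linarith
  have hP1 : (0:ℚ) < (p:ℚ) - 1 := by linarith
  have hq : (0:ℚ) < (p:ℚ)^(n-1) := pow_pos hP0 _
  have hPn : (p:ℚ)^n = (p:ℚ)^(n-1) * (p:ℚ) := by
    rw [← pow_succ]; congr 1; omega
  have hPn1 : (p:ℚ)^(n+1) = (p:ℚ)^(n-1) * (p:ℚ)^2 := by
    rw [← pow_add]; congr 1; omega
  rw [hPn, hPn1]
  have hc : (0:ℚ) < (p:ℚ)^(n-1) * ((p:ℚ)-1) * (p:ℚ)^2 := by positivity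
  rw [← mul_lt_mul_iff_left₀ hc]
  rw [show ((k : ℚ) / ((p : ℚ) ^ (n - 1) * ((p : ℚ) - 1)) - ((k : ℚ) - (t : ℚ)) / ((p:ℚ)^(n-1)*(p:ℚ))
        - (t : ℚ) / ((p:ℚ)^(n-1)*(p:ℚ)^2)) * ((p:ℚ)^(n-1) * ((p:ℚ)-1) * (p:ℚ)^2)
      = (k:ℚ)*(p:ℚ) + (t:ℚ)*((p:ℚ)-1)^2 from by field_simp; ring,
    show (2 / ((p : ℚ) ^ (n - 1) * ((p : ℚ) - 1))) * ((p:ℚ)^(n-1) * ((p:ℚ)-1) * (p:ℚ)^2)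
      = 2*(p:ℚ)^2 from by field_simp]
  have hk2 : (k:ℚ) ≤ 2*(p:ℚ) - 1 := by
    have h' : k + 1 ≤ 2*p := by omega
    have : (k:ℚ) + 1 ≤ 2*(p:ℚ) := by exact_mod_cast h'
    linarith
  rcases Nat.lt_or_ge t 3 with h3 | h3
  · interval_cases t
    · exact iff_of_true (by push_cast; nlinarith) (by omega)
    · constructor
      · intro h
        have hkle : k ≤ p + 1 := by
          by_contra hcon
          push_neg at hcon
          have : (p:ℚ) + 2 ≤ (k:ℚ) := by exact_mod_cast hcon
          push_cast at h
          nlinarith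
        omega
      · intro h
        have hkle : k ≤ p + 1 := by omega
        have : (k:ℚ) ≤ (p:ℚ) + 1 := by exact_mod_cast hkle
        push_cast
        nlinarith
    · constructor
      · intro h
        have hkle : k ≤ 3 := by
          by_contra hcon
          push_neg at hcon
          have : (4:ℚ) ≤ (k:ℚ) := by exact_mod_cast hcon
          push_cast at h
          nlinarith
        omega
      · intro h
        have hkle : k ≤ 3 := by omega
        have : (k:ℚ) ≤ 3 := by exact_mod_cast hkle
        push_cast
        nlinarith
  · have h3q : (3:ℚ) ≤ (t:ℚ) := by exact_mod_cast h3
    have hkt : (t:ℚ) ≤ (k:ℚ) := by exact_mod_cast ht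
    refine iff_of_false ?_ (by omega)
    push_neg
    nlinarith [mul_le_mul_of_nonneg_right h3q (sq_nonneg ((p:ℚ)-1)),
      mul_le_mul_of_nonneg_right hkt hP0.le,
      mul_le_mul_of_nonneg_right hP3 hP0.le]
end
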